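/- arXiv:1408.5839 — 8 statements merged into one kernel-verified Lean document; each statement's English description precedes it below -/
import Mathlib

section
/- Let U : ℝ → [0,∞) be measurable and even with ∫_ℝ U(x) dx < ∞ and ∫_ℝ x²·U(x) dx < ∞. For f ∈ L²(ℝ), the integral (K f)(u) := ∫_ℝ (1/2)·√(U(u))·(|u+u′| − |u−u′|)·√(U(u′))·f(u′) du′ converges absolutely for almost every u, and K f ∈ L²(ℝ) with ‖K f‖_{L²} ≤ 4·( ∫_ℝ U(x) dx · ∫_ℝ x²·U(x) dx )^{1/2} · ‖f‖_{L²}; in other words, the kernel (u,u′) ↦ (1/2)·√(U(u))·(|u+u′|−|u−u′|)·√(U(u′)) defines a bounded operator on L²(ℝ) of operator norm at most 4·(‖U‖_{L¹}·‖x²U(x)‖_{L¹})^{1/2}. -/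
open MeasureTheory Real

lemma abs_add_sub_abs_sub_le (a b : ℝ) :
    |(|a + b| - |a - b|)| ≤ 2 * Real.sqrt (|a| * |b|) := by
  have hmin : min |a| |b| ≤ Real.sqrt (|a| * |b|) := by
    have h1 : min |a| |b| = Real.sqrt (min |a| |b| ^ 2) :=
      (Real.sqrt_sq (le_min (abs_nonneg a) (abs_nonneg b))).symm
    rw [h1]
    apply Real.sqrt_le_sqrt
    rcases le_total |a| |b| with h | h
    · rw [min_eq_left h]; nlinarith [abs_nonneg a]
    · rw [min_eq_right h]; nlinarith [abs_nonneg b]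
  have hb : |(|a + b| - |a - b|)| ≤ 2 * |b| := by
    have h := abs_abs_sub_abs_le_abs_sub (a + b) (a - b)
    have e : (a + b) - (a - b) = 2 * b := by ring
    rw [e, abs_mul, abs_two] at h
    exact h
  have ha : |(|a + b| - |a - b|)| ≤ 2 * |a| := by
    have h := abs_abs_sub_abs_le_abs_sub (a + b) (b - a)
    have e : (a + b) - (b - a) = 2 * a := by ring
    rw [e, abs_mul, abs_two, abs_sub_comm b a] at h
    exact h
  have h2 : |(|a + b| - |a - b|)| ≤ 2 * min |a| |b| := by
    rcases le_total |a| |b| with h | h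
    · rw [min_eq_left h]; exact ha
    · rw [min_eq_right h]; exact hb
  linarith

/-- The kernel `(u,u') ↦ ½·√U(u)·(|u+u'| − |u−u'|)·√U(u')` defines a
bounded operator on `L²(ℝ)` with operator norm at most `4·(‖U‖₁·‖x²U‖₁)^{1/2}`. -/
theorem stmt2
    (U : ℝ → ℝ) (hUmeas : Measurable U) (hUnonneg : ∀ x, 0 ≤ U x)
    (hUeven : ∀ x, U (-x) = U x)
    (hU1 : Integrable U) (hU2 : Integrable (fun x => x ^ 2 * U x))
    (f : ℝ → ℝ) (hf : MemLp f 2 volume) :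
    (∀ᵐ u : ℝ, Integrable (fun u' : ℝ =>
        (1 / 2) * Real.sqrt (U u) * (|u + u'| - |u - u'|) * Real.sqrt (U u') * f u')) ∧
    MemLp (fun u : ℝ => ∫ u' : ℝ,
        (1 / 2) * Real.sqrt (U u) * (|u + u'| - |u - u'|) * Real.sqrt (U u') * f u') 2 volume ∧
    eLpNorm (fun u : ℝ => ∫ u' : ℝ,
        (1 / 2) * Real.sqrt (U u) * (|u + u'| - |u - u'|) * Real.sqrt (U u') * f u') 2 volume
      ≤ ENNReal.ofReal (4 * Real.sqrt ((∫ x : ℝ, U x) * (∫ x : ℝ, x ^ 2 * U x)))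
          * eLpNorm f 2 volume := by
  have h2e : (ENNReal.ofReal (2:ℝ)) = 2 := by norm_num
  have hconj : Real.HolderConjugate 2 2 := ⟨by norm_num, by norm_num, by norm_num⟩
  -- the dominating function g
  set g : ℝ → ℝ := fun x => Real.sqrt (|x| * U x) with hg_def
  have hg_meas : Measurable g := (measurable_abs.mul hUmeas).sqrt
  have hg_nonneg : ∀ x, 0 ≤ g x := fun x => Real.sqrt_nonneg _
  have hg_sq : ∀ x, g x ^ 2 = |x| * U x := fun x =>
    Real.sq_sqrt (mul_nonneg (abs_nonneg x) (hUnonneg x))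
  -- integrability of |x|·U x
  have hI1 : Integrable (fun x => |x| * U x) := by
    refine (hU1.add hU2).mono' ((measurable_abs.mul hUmeas).aestronglyMeasurable) ?_
    filter_upwards with x
    have hx : 0 ≤ |x| * U x := mul_nonneg (abs_nonneg x) (hUnonneg x)
    simp only [Pi.add_apply]
    rw [Real.norm_of_nonneg hx]
    nlinarith [hUnonneg x, sq_abs x, sq_nonneg (|x| - 1), sq_nonneg x]
  have hg2 : MemLp g 2 volume := by
    rw [memLp_two_iff_integrable_sq hg_meas.aestronglyMeasurable]
    exact hI1.congr (by filter_upwards with x using (hg_sq x).symm)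
  have hfabs : MemLp (fun x => |f x|) 2 volume := by
    simpa [Real.norm_eq_abs] using hf.norm
  -- g·|f| is integrable (Hölder)
  have hGF : Integrable (fun x => g x * |f x|) := by
    have h := hfabs.smul (φ := g) hg2 (p := 2) (q := 2) (r := 1)
      (hpqr := ⟨by rw [inv_one]; exact ENNReal.inv_two_add_inv_two⟩)
    rw [memLp_one_iff_integrable] at h
    exact h.congr (by filter_upwards with x using by simp [smul_eq_mul])
  set A : ℝ := ∫ x, g x * |f x| with hA_def
  have hA0 : 0 ≤ A := integral_nonneg fun x => mul_nonneg (hg_nonneg x) (abs_nonneg _)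
  -- pointwise kernel bound
  have hker : ∀ u u' : ℝ,
      |(1 / 2) * Real.sqrt (U u) * (|u + u'| - |u - u'|) * Real.sqrt (U u') * f u'|
        ≤ g u * (g u' * |f u'|) := by
    intro u u'
    have h0 := abs_add_sub_abs_sub_le u u'
    have e1 : Real.sqrt (|u| * U u) = Real.sqrt |u| * Real.sqrt (U u) :=
      Real.sqrt_mul (abs_nonneg u) _
    have e2 : Real.sqrt (|u'| * U u') = Real.sqrt |u'| * Real.sqrt (U u') :=
      Real.sqrt_mul (abs_nonneg u') _
    have e3 : Real.sqrt (|u| * |u'|) = Real.sqrt |u| * Real.sqrt |u'| :=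
      Real.sqrt_mul (abs_nonneg u) _
    have habs : |(1 / 2) * Real.sqrt (U u) * (|u + u'| - |u - u'|) * Real.sqrt (U u') * f u'|
        = (1 / 2) * Real.sqrt (U u) * |(|u + u'| - |u - u'|)| * Real.sqrt (U u') * |f u'| := by
      rw [abs_mul, abs_mul, abs_mul, abs_mul,
        abs_of_nonneg (Real.sqrt_nonneg (U u)), abs_of_nonneg (Real.sqrt_nonneg (U u')),
        abs_of_nonneg (by norm_num : (0:ℝ) ≤ (1:ℝ)/2)]
    rw [habs]
    have hstep : (1 / 2) * Real.sqrt (U u) * |(|u + u'| - |u - u'|)| * Real.sqrt (U u') * |f u'|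
        ≤ (1 / 2) * Real.sqrt (U u) * (2 * Real.sqrt (|u| * |u'|)) * Real.sqrt (U u') * |f u'| :=
      mul_le_mul_of_nonneg_right (mul_le_mul_of_nonneg_right
        (mul_le_mul_of_nonneg_left h0 (by positivity : (0:ℝ) ≤ (1/2) * Real.sqrt (U u)))
        (Real.sqrt_nonneg (U u'))) (abs_nonneg (f u'))
    refine hstep.trans (le_of_eq ?_)
    simp only [hg_def, e1, e2, e3]
    ring
  -- measurability of the integrand, for each u
  have hker_meas : ∀ u : ℝ, AEStronglyMeasurable (fun u' : ℝ =>
      (1 / 2) * Real.sqrt (U u) * (|u + u'| - |u - u'|) * Real.sqrt (U u') * f u') volume := by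
    intro u
    refine AEStronglyMeasurable.mul ?_ hf.1
    apply Measurable.aestronglyMeasurable
    have hd : Measurable fun u' : ℝ => |u + u'| - |u - u'| :=
      ((measurable_const.add measurable_id).abs).sub ((measurable_const.sub measurable_id).abs)
    exact (measurable_const.mul hd).mul hUmeas.sqrt
  have hInt_all : ∀ u : ℝ, Integrable (fun u' : ℝ =>
      (1 / 2) * Real.sqrt (U u) * (|u + u'| - |u - u'|) * Real.sqrt (U u') * f u') := by
    intro u
    refine (hGF.const_mul (g u)).mono' (hker_meas u) ?_
    filter_upwards with u'
    rw [Real.norm_eq_abs]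
    exact hker u u'
  have hKf_bound : ∀ u : ℝ,
      |∫ u' : ℝ, (1 / 2) * Real.sqrt (U u) * (|u + u'| - |u - u'|) * Real.sqrt (U u') * f u'|
        ≤ A * g u := by
    intro u
    have h1 : |∫ u' : ℝ, (1 / 2) * Real.sqrt (U u) * (|u + u'| - |u - u'|)
          * Real.sqrt (U u') * f u'|
        ≤ ∫ u' : ℝ, |(1 / 2) * Real.sqrt (U u) * (|u + u'| - |u - u'|)
          * Real.sqrt (U u') * f u'| := by
      have h := norm_integral_le_integral_norm (μ := volume) (fun u' : ℝ => (1 / 2)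
        * Real.sqrt (U u) * (|u + u'| - |u - u'|) * Real.sqrt (U u') * f u')
      simp only [Real.norm_eq_abs] at h
      exact h
    have h2 : (∫ u' : ℝ, |(1 / 2) * Real.sqrt (U u) * (|u + u'| - |u - u'|)
          * Real.sqrt (U u') * f u'|)
        ≤ ∫ u' : ℝ, g u * (g u' * |f u'|) := by
      refine integral_mono (hInt_all u).abs (hGF.const_mul (g u)) fun u' => hker u u'
    have h3 : (∫ u' : ℝ, g u * (g u' * |f u'|)) = g u * A := by
      rw [integral_const_mul]
    calc _ ≤ _ := h1
      _ ≤ _ := h2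
      _ = g u * A := h3
      _ = A * g u := mul_comm _ _
  have hK_meas : AEStronglyMeasurable (fun u : ℝ => ∫ u' : ℝ,
      (1 / 2) * Real.sqrt (U u) * (|u + u'| - |u - u'|) * Real.sqrt (U u') * f u') volume := by
    have hkerjoint : AEStronglyMeasurable (fun p : ℝ × ℝ =>
        (1 / 2) * Real.sqrt (U p.1) * (|p.1 + p.2| - |p.1 - p.2|) * Real.sqrt (U p.2) * f p.2)
        ((volume : Measure ℝ).prod volume) := by
      refine AEStronglyMeasurable.mul ?_ (hf.1.comp_snd)
      apply Measurable.aestronglyMeasurable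
      exact ((measurable_const.mul ((hUmeas.comp measurable_fst).sqrt)).mul
        (((measurable_fst.add measurable_snd).abs).sub
          ((measurable_fst.sub measurable_snd).abs))).mul ((hUmeas.comp measurable_snd).sqrt)
    exact hkerjoint.integral_prod_right'
  have hKmem : MemLp (fun u : ℝ => ∫ u' : ℝ,
      (1 / 2) * Real.sqrt (U u) * (|u + u'| - |u - u'|) * Real.sqrt (U u') * f u') 2 volume := by
    refine MemLp.of_le (hg2.const_mul A) hK_meas ?_
    filter_upwards with u
    rw [Real.norm_eq_abs, Real.norm_eq_abs]
    exact (hKf_bound u).trans (le_abs_self _)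
  have hbound2 : eLpNorm (fun u : ℝ => ∫ u' : ℝ,
        (1 / 2) * Real.sqrt (U u) * (|u + u'| - |u - u'|) * Real.sqrt (U u') * f u') 2 volume
      ≤ eLpNorm (fun u => A * g u) 2 volume := by
    refine eLpNorm_mono fun u => ?_
    rw [Real.norm_eq_abs, Real.norm_eq_abs]
    exact (hKf_bound u).trans (le_abs_self _)
  have hsmul : eLpNorm (fun u => A * g u) 2 volume = ENNReal.ofReal A * eLpNorm g 2 volume := by
    have : (fun u => A * g u) = A • g := by funext u; simp [smul_eq_mul]
    rw [this, eLpNorm_const_smul]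
    simp [ENNReal.smul_def, Real.enorm_eq_ofReal hA0]
  -- values of the L² norms
  set Gn : ℝ := (∫ x : ℝ, g x ^ (2:ℝ)) ^ ((1:ℝ)/2) with hGn_def
  set Fn : ℝ := (∫ x : ℝ, |f x| ^ (2:ℝ)) ^ ((1:ℝ)/2) with hFn_def
  have hGn0 : 0 ≤ Gn := Real.rpow_nonneg
    (integral_nonneg fun x => Real.rpow_nonneg (hg_nonneg x) _) _
  have hFn0 : 0 ≤ Fn := Real.rpow_nonneg
    (integral_nonneg fun x => Real.rpow_nonneg (abs_nonneg _) _) _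
  have ht2 : (2:ENNReal).toReal = 2 := by norm_num
  have hhalf : ((2:ENNReal).toReal)⁻¹ = (1:ℝ)/2 := by rw [ht2]; norm_num
  have hgi : (∫ x : ℝ, |g x| ^ (2:ℝ)) = ∫ x : ℝ, g x ^ (2:ℝ) :=
    integral_congr_ae (Filter.Eventually.of_forall fun x => by
      show |g x| ^ (2:ℝ) = g x ^ (2:ℝ)
      rw [abs_of_nonneg (hg_nonneg x)])
  have hg_eLp : eLpNorm g 2 volume = ENNReal.ofReal Gn := by
    rw [hg2.eLpNorm_eq_integral_rpow_norm (by norm_num) (by norm_num), hhalf, ht2]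
    simp only [Real.norm_eq_abs]
    rw [hgi, hGn_def]
  have hf_eLp : eLpNorm f 2 volume = ENNReal.ofReal Fn := by
    rw [hf.eLpNorm_eq_integral_rpow_norm (by norm_num) (by norm_num), hhalf, ht2]
    simp only [Real.norm_eq_abs]
    rw [hFn_def]
  -- Hölder for A
  have hA_le : A ≤ Gn * Fn := by
    have h := integral_mul_le_Lp_mul_Lq_of_nonneg (μ := volume) hconj
      (Filter.Eventually.of_forall hg_nonneg)
      (Filter.Eventually.of_forall fun x => abs_nonneg (f x))
      (h2e ▸ hg2) (h2e ▸ hfabs)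
    simpa [hGn_def, hFn_def] using h
  -- Gn² = ∫ |x| U x
  have rpow_two' : ∀ t : ℝ, t ^ (2:ℝ) = t ^ 2 := fun t => by
    rw [show (2:ℝ) = ((2:ℕ):ℝ) by norm_num, Real.rpow_natCast]
  have hGn_sq : Gn ^ 2 = ∫ x : ℝ, |x| * U x := by
    have hInn : (0:ℝ) ≤ ∫ x : ℝ, g x ^ (2:ℝ) :=
      integral_nonneg fun x => Real.rpow_nonneg (hg_nonneg x) _
    rw [← rpow_two' Gn, hGn_def, ← Real.rpow_mul hInn,
      show ((1:ℝ)/2) * 2 = 1 by norm_num, Real.rpow_one]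
    refine integral_congr_ae (Filter.Eventually.of_forall fun x => ?_)
    show g x ^ (2:ℝ) = |x| * U x
    rw [rpow_two' (g x), hg_sq]
  -- second Hölder: ∫|x|U ≤ √(∫U · ∫x²U)
  have hI1_le : (∫ x : ℝ, |x| * U x)
      ≤ Real.sqrt ((∫ x : ℝ, U x) * (∫ x : ℝ, x ^ 2 * U x)) := by
    set φ : ℝ → ℝ := fun x => Real.sqrt (U x) with hφ_def
    set ψ : ℝ → ℝ := fun x => |x| * Real.sqrt (U x) with hψ_def
    have hφ_meas : Measurable φ := hUmeas.sqrt
    have hψ_meas : Measurable ψ := measurable_abs.mul hUmeas.sqrt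
    have hφ2 : MemLp φ 2 volume := by
      rw [memLp_two_iff_integrable_sq hφ_meas.aestronglyMeasurable]
      exact hU1.congr (Filter.Eventually.of_forall fun x =>
        (Real.sq_sqrt (hUnonneg x)).symm)
    have hψ2 : MemLp ψ 2 volume := by
      rw [memLp_two_iff_integrable_sq hψ_meas.aestronglyMeasurable]
      refine hU2.congr (Filter.Eventually.of_forall fun x => ?_)
      rw [hψ_def]
      simp only
      rw [mul_pow, Real.sq_sqrt (hUnonneg x), sq_abs]
    have h := integral_mul_le_Lp_mul_Lq_of_nonneg (μ := volume) hconj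
      (Filter.Eventually.of_forall fun x => Real.sqrt_nonneg (U x))
      (Filter.Eventually.of_forall fun x => mul_nonneg (abs_nonneg x) (Real.sqrt_nonneg _))
      (h2e ▸ hφ2) (h2e ▸ hψ2)
    have hprod : (∫ x : ℝ, φ x * ψ x) = ∫ x : ℝ, |x| * U x := by
      refine integral_congr_ae (Filter.Eventually.of_forall fun x => ?_)
      show φ x * ψ x = |x| * U x
      rw [hφ_def, hψ_def]
      simp only
      rw [show Real.sqrt (U x) * (|x| * Real.sqrt (U x))
          = |x| * (Real.sqrt (U x) * Real.sqrt (U x)) by ring,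
        Real.mul_self_sqrt (hUnonneg x)]
    have hφint : (∫ x : ℝ, φ x ^ (2:ℝ)) = ∫ x : ℝ, U x := by
      refine integral_congr_ae (Filter.Eventually.of_forall fun x => ?_)
      show φ x ^ (2:ℝ) = U x
      rw [rpow_two' (φ x), hφ_def]
      simp only
      rw [Real.sq_sqrt (hUnonneg x)]
    have hψint : (∫ x : ℝ, ψ x ^ (2:ℝ)) = ∫ x : ℝ, x ^ 2 * U x := by
      refine integral_congr_ae (Filter.Eventually.of_forall fun x => ?_)
      show ψ x ^ (2:ℝ) = x ^ 2 * U x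
      rw [rpow_two' (ψ x), hψ_def]
      simp only
      rw [mul_pow, Real.sq_sqrt (hUnonneg x), sq_abs]
    rw [hprod, hφint, hψint] at h
    refine h.trans (le_of_eq ?_)
    rw [Real.sqrt_mul (integral_nonneg fun x => hUnonneg x),
      Real.sqrt_eq_rpow, Real.sqrt_eq_rpow]
  -- final assembly
  have hGF0 : 0 ≤ (∫ x : ℝ, U x) * (∫ x : ℝ, x ^ 2 * U x) :=
    mul_nonneg (integral_nonneg fun x => hUnonneg x)
      (integral_nonneg fun x => mul_nonneg (sq_nonneg x) (hUnonneg x))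
  refine ⟨Filter.Eventually.of_forall hInt_all, hKmem, ?_⟩
  calc eLpNorm (fun u : ℝ => ∫ u' : ℝ,
        (1 / 2) * Real.sqrt (U u) * (|u + u'| - |u - u'|) * Real.sqrt (U u') * f u') 2 volume
      ≤ eLpNorm (fun u => A * g u) 2 volume := hbound2
    _ = ENNReal.ofReal A * eLpNorm g 2 volume := hsmul
    _ = ENNReal.ofReal (A * Gn) := by rw [hg_eLp, ← ENNReal.ofReal_mul hA0]
    _ ≤ ENNReal.ofReal ((4 * Real.sqrt ((∫ x : ℝ, U x) * (∫ x : ℝ, x ^ 2 * U x))) * Fn) := by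
        apply ENNReal.ofReal_le_ofReal
        have h1 : A * Gn ≤ (Gn * Fn) * Gn := mul_le_mul_of_nonneg_right hA_le hGn0
        have h2 : (Gn * Fn) * Gn = (Gn ^ 2) * Fn := by ring
        have h3 : (Gn ^ 2) * Fn ≤ (4 * Real.sqrt ((∫ x : ℝ, U x)
            * (∫ x : ℝ, x ^ 2 * U x))) * Fn := by
          apply mul_le_mul_of_nonneg_right _ hFn0
          rw [hGn_sq]
          nlinarith [Real.sqrt_nonneg ((∫ x : ℝ, U x) * (∫ x : ℝ, x ^ 2 * U x))]
        linarith
    _ = ENNReal.ofReal (4 * Real.sqrt ((∫ x : ℝ, U x) * (∫ x : ℝ, x ^ 2 * U x)))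
          * ENNReal.ofReal Fn := by
        rw [ENNReal.ofReal_mul (by positivity)]
    _ = ENNReal.ofReal (4 * Real.sqrt ((∫ x : ℝ, U x) * (∫ x : ℝ, x ^ 2 * U x)))
          * eLpNorm f 2 volume := by rw [hf_eLp]
end

section
/- For all real numbers u and u′, the function x ↦ sin(πxu)·sin(πxu′)/(π²x²) (extended by its limit u·u′ at x = 0) is Lebesgue integrable on ℝ, and ∫_ℝ sin(πxu)·sin(πxu′)/(π²x²) dx = (1/2)·( |u+u′| − |u−u′| ). -/
open Real

section Aux
open MeasureTheory Set Complex
open scoped FourierTransform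

lemma tri_cos (a c : ℝ) (ha : 0 ≤ a) (hc : c ≠ 0) :
    ∫ t : ℝ, ((a - |t|) ⊔ 0) * Real.cos (c * t)
      = 2 * (1 - Real.cos (c * a)) / c ^ 2 := by
  have hsupp : Function.support (fun t : ℝ => ((a - |t|) ⊔ 0) * Real.cos (c * t)) ⊆ Ioc (-a) a := by
    intro t ht
    simp only [Function.mem_support] at ht
    by_contra htm
    apply ht
    have h2 : a ≤ |t| := by
      simp only [mem_Ioc, not_and_or, not_lt, not_le] at htm
      rcases htm with h1 | h1
      · rw [abs_of_nonpos (by linarith)]; linarith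
      · rw [abs_of_pos (by linarith)]; linarith
    have : (a - |t|) ⊔ 0 = 0 := sup_eq_right.mpr (by linarith)
    rw [this, zero_mul]
  rw [← intervalIntegral.integral_eq_integral_of_support_subset hsupp]
  have hcont : Continuous (fun t : ℝ => ((a - |t|) ⊔ 0) * Real.cos (c * t)) := by fun_prop
  rw [← intervalIntegral.integral_add_adjacent_intervals (b := 0)
    (hcont.intervalIntegrable _ _) (hcont.intervalIntegrable _ _)]
  have hs : ∀ t : ℝ, HasDerivAt (fun t : ℝ => Real.sin (c * t)) (Real.cos (c * t) * c) t :=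
    fun t => by simpa using ((hasDerivAt_id t).const_mul c).sin
  have hcd : ∀ t : ℝ, HasDerivAt (fun t : ℝ => Real.cos (c * t)) (-Real.sin (c * t) * c) t :=
    fun t => by simpa using ((hasDerivAt_id t).const_mul c).cos
  have h1 : (∫ t in (-a)..0, ((a - |t|) ⊔ 0) * Real.cos (c * t))
      = (1 - Real.cos (c * a)) / c ^ 2 := by
    rw [intervalIntegral.integral_congr (g := fun t => (a + t) * Real.cos (c * t))
      (fun t htm => by
        rw [uIcc_of_le (by linarith : -a ≤ (0:ℝ))] at htm
        obtain ⟨ht1, ht2⟩ := htm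
        simp only [abs_of_nonpos ht2]
        rw [sup_eq_left.mpr (by linarith)]
        ring_nf)]
    rw [intervalIntegral.integral_eq_sub_of_hasDerivAt
      (f := fun t => (a + t) * Real.sin (c * t) / c + Real.cos (c * t) / c ^ 2)
      (fun t _ => by
        have h := ((((hasDerivAt_id t).const_add a).mul (hs t)).div_const c).add
          ((hcd t).div_const (c ^ 2))
        convert h using 1
        · rfl
        simp only [id]
        field_simp
        ring)
      ((by fun_prop : Continuous fun t : ℝ => (a + t) * Real.cos (c * t)).intervalIntegrable _ _)]
    simp [mul_neg, Real.cos_neg]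
    ring
  have h2 : (∫ t in (0:ℝ)..a, ((a - |t|) ⊔ 0) * Real.cos (c * t))
      = (1 - Real.cos (c * a)) / c ^ 2 := by
    rw [intervalIntegral.integral_congr (g := fun t => (a - t) * Real.cos (c * t))
      (fun t htm => by
        rw [uIcc_of_le ha] at htm
        obtain ⟨ht1, ht2⟩ := htm
        simp only [_root_.abs_of_nonneg ht1]
        rw [sup_eq_left.mpr (by linarith)])]
    rw [intervalIntegral.integral_eq_sub_of_hasDerivAt
      (f := fun t => (a - t) * Real.sin (c * t) / c - Real.cos (c * t) / c ^ 2)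
      (fun t _ => by
        have h := ((((hasDerivAt_id t).const_sub a).mul (hs t)).div_const c).sub
          ((hcd t).div_const (c ^ 2))
        convert h using 1
        · rfl
        simp only [id]
        field_simp
        ring)
      ((by fun_prop : Continuous fun t : ℝ => (a - t) * Real.cos (c * t)).intervalIntegrable _ _)]
    simp
    ring
  rw [h1, h2]
  ring

lemma tri_sin (a c : ℝ) : ∫ t : ℝ, ((a - |t|) ⊔ 0) * Real.sin (c * t) = 0 := by
  have h : ∫ t : ℝ, ((a - |t|) ⊔ 0) * Real.sin (c * t)
      = ∫ t : ℝ, ((a - |-t|) ⊔ 0) * Real.sin (c * -t) := (integral_neg_eq_self _ _).symm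
  rw [show (fun t : ℝ => ((a - |-t|) ⊔ 0) * Real.sin (c * -t))
      = fun t : ℝ => -(((a - |t|) ⊔ 0) * Real.sin (c * t)) by
    funext t; simp [mul_neg, Real.sin_neg]] at h
  rw [integral_neg] at h
  linarith

lemma tri_zero {a : ℝ} (t : ℝ) (ht : t ∉ Icc (-a) a) : (a - |t|) ⊔ 0 = 0 := by
  apply sup_eq_right.mpr
  simp only [mem_Icc, not_and_or, not_le] at ht
  have := abs_nonneg t
  have := neg_abs_le t
  have := le_abs_self t
  rcases ht with h | h <;> linarith

lemma Fbound (a : ℝ) :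
    ∀ x : ℝ, ‖if x = 0 then a^2 else (1 - Real.cos (2*π*a*x)) / (2*π^2*x^2)‖
      ≤ (2*(a^2+1)) * (1+x^2)⁻¹ := by
  intro x
  have hpi : (1:ℝ) < π ^ 2 := by nlinarith [Real.pi_gt_three]
  have h1x : (0:ℝ) < 1 + x^2 := by positivity
  have hnn : 0 ≤ if x = 0 then a^2 else (1 - Real.cos (2*π*a*x)) / (2*π^2*x^2) := by
    by_cases hx : x = 0
    · simp [hx]; positivity
    · simp only [if_neg hx]
      apply div_nonneg _ (by positivity)
      nlinarith [Real.cos_le_one (2*π*a*x)]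
  rw [Real.norm_eq_abs, _root_.abs_of_nonneg hnn, ← div_eq_mul_inv, le_div_iff₀ h1x]
  by_cases hx : x = 0
  · simp only [if_pos hx, hx]; norm_num; nlinarith
  · have hx2 : (0:ℝ) < x^2 := by positivity
    simp only [if_neg hx]
    rw [div_mul_eq_mul_div, div_le_iff₀ (by positivity)]
    rcases le_or_gt (x^2) 1 with h | h
    · have hc : 1 - Real.cos (2*π*a*x) ≤ 2*π^2*a^2*x^2 := by
        nlinarith [Real.one_sub_sq_div_two_le_cos (x := 2*π*a*x)]
      nlinarith [Real.cos_le_one (2*π*a*x), sq_nonneg (a*x), sq_nonneg a, Real.pi_pos,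
        mul_pos hx2 (mul_pos (by positivity : (0:ℝ) < 2*π^2) hx2)]
    · have hc : 1 - Real.cos (2*π*a*x) ≤ 2 := by nlinarith [Real.neg_one_le_cos (2*π*a*x)]
      nlinarith [sq_nonneg a, sq_nonneg (a*x), mul_pos hx2 hx2]

lemma fourier_tri (a : ℝ) (ha : 0 ≤ a) {x : ℝ} (hx : x ≠ 0) :
    𝓕 (fun t : ℝ => (((a - |t|) ⊔ 0 : ℝ) : ℂ)) x
      = (((1 - Real.cos (2*π*a*x)) / (2*π^2*x^2) : ℝ) : ℂ) := by
  have hpi := Real.pi_pos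
  set c : ℝ := 2*π*x with hc
  have hc0 : c ≠ 0 := by
    simp only [hc]; intro hh; exact hx (by nlinarith)
  have hg1 : Integrable (fun t : ℝ => ((((a - |t|) ⊔ 0) * Real.cos (c * t) : ℝ) : ℂ)) := by
    apply Continuous.integrable_of_hasCompactSupport (by fun_prop)
    apply HasCompactSupport.intro (isCompact_Icc (a := -a) (b := a))
    intro t ht
    rw [tri_zero t ht]
    simp
  have hg2 : Integrable (fun t : ℝ => ((((a - |t|) ⊔ 0) * Real.sin (c * t) : ℝ) : ℂ)) := by
    apply Continuous.integrable_of_hasCompactSupport (by fun_prop)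
    apply HasCompactSupport.intro (isCompact_Icc (a := -a) (b := a))
    intro t ht
    rw [tri_zero t ht]
    simp
  rw [Real.fourier_real_eq_integral_exp_smul]
  have hint : ∀ v : ℝ, Complex.exp (↑(-2 * π * v * x) * Complex.I) • (((a - |v|) ⊔ 0 : ℝ) : ℂ)
      = ((((a - |v|) ⊔ 0) * Real.cos (c * v) : ℝ) : ℂ)
        - ((((a - |v|) ⊔ 0) * Real.sin (c * v) : ℝ) : ℂ) * Complex.I := by
    intro v
    have harg : (-2 * π * v * x : ℝ) = -(c * v) := by rw [hc]; ring
    rw [harg, Complex.exp_mul_I, smul_eq_mul]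
    push_cast
    simp only [Complex.cos_neg, Complex.sin_neg, ← Complex.ofReal_mul, ← Complex.ofReal_cos,
      ← Complex.ofReal_sin]
    push_cast
    ring
  simp_rw [hint]
  have hio1 : (∫ t : ℝ, ((((a - |t|) ⊔ 0) * Real.cos (c * t) : ℝ) : ℂ))
      = ((∫ t : ℝ, ((a - |t|) ⊔ 0) * Real.cos (c * t) : ℝ) : ℂ) := integral_ofReal
  have hio2 : (∫ t : ℝ, ((((a - |t|) ⊔ 0) * Real.sin (c * t) : ℝ) : ℂ))
      = ((∫ t : ℝ, ((a - |t|) ⊔ 0) * Real.sin (c * t) : ℝ) : ℂ) := integral_ofReal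
  rw [integral_sub hg1 (hg2.mul_const Complex.I), integral_mul_const, hio1, hio2,
    tri_cos a c ha hc0, tri_sin a c]
  simp only [Complex.ofReal_zero, zero_mul, sub_zero]
  norm_cast
  rw [hc]
  rw [show (2*π*x)*a = 2*π*a*x by ring]
  rw [div_eq_div_iff (by positivity) (by positivity)]
  ring

lemma core (a : ℝ) (ha : 0 ≤ a) :
    Integrable (fun x : ℝ => if x = 0 then a^2 else (1 - Real.cos (2*π*a*x)) / (2*π^2*x^2)) ∧
    (∫ x : ℝ, if x = 0 then a^2 else (1 - Real.cos (2*π*a*x)) / (2*π^2*x^2)) = a := by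
  set F : ℝ → ℝ := fun x => if x = 0 then a^2 else (1 - Real.cos (2*π*a*x)) / (2*π^2*x^2) with hF
  set f : ℝ → ℂ := fun t => (((a - |t|) ⊔ 0 : ℝ) : ℂ) with hf
  have hFmeas : Measurable F := by
    apply Measurable.ite measurableSet_eq measurable_const
    fun_prop
  have hFint : Integrable F :=
    Integrable.mono' (integrable_inv_one_add_sq.const_mul (2*(a^2+1)))
      hFmeas.aestronglyMeasurable (ae_of_all _ (Fbound a))
  refine ⟨hFint, ?_⟩
  have hfcont : Continuous f := by fun_prop
  have hfint : Integrable f := by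
    apply hfcont.integrable_of_hasCompactSupport
    apply HasCompactSupport.intro (isCompact_Icc (a := -a) (b := a))
    intro t ht
    simp [hf, tri_zero t ht]
  have hae : 𝓕 f =ᵐ[volume] fun x => ((F x : ℝ) : ℂ) := by
    have h0 : ∀ᵐ x : ℝ, x ≠ 0 := by
      rw [ae_iff]
      simp only [ne_eq, not_not, setOf_eq_eq_singleton]
      exact measure_singleton 0
    filter_upwards [h0] with x hx
    rw [fourier_tri a ha hx, hF]
    simp [if_neg hx]
  have h𝓕int : Integrable (𝓕 f) := (hFint.ofReal (𝕜 := ℂ)).congr hae.symm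
  have hinv := hfint.fourierInv_fourier_eq h𝓕int (hfcont.continuousAt (x := 0))
  have hlhs : 𝓕⁻ (𝓕 f) 0 = ∫ x : ℝ, 𝓕 f x := by
    rw [Real.fourierInv_eq]
    simp
  have hre : (∫ x : ℝ, ((F x : ℝ) : ℂ)) = ((∫ x : ℝ, F x : ℝ) : ℂ) := integral_ofReal
  rw [hlhs, integral_congr_ae hae, hre] at hinv
  have hf0 : f 0 = ((a : ℝ) : ℂ) := by
    simp [hf, sup_eq_left.mpr ha]
  rw [hf0] at hinv
  exact_mod_cast hinv

lemma coreH (b : ℝ) :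
    Integrable (fun x : ℝ => if x = 0 then b^2/2 else (1 - Real.cos (b*x)) / x^2) ∧
    (∫ x : ℝ, if x = 0 then b^2/2 else (1 - Real.cos (b*x)) / x^2) = π * |b| := by
  have hpi := Real.pi_pos
  set a : ℝ := |b| / (2*π) with haa
  have ha : 0 ≤ a := by positivity
  have h2pa : 2*π*a = |b| := by rw [haa]; field_simp
  have heq : (fun x : ℝ => if x = 0 then b^2/2 else (1 - Real.cos (b*x)) / x^2)
      = fun x : ℝ => 2*π^2 * (if x = 0 then a^2 else (1 - Real.cos (2*π*a*x)) / (2*π^2*x^2)) := by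
    funext x
    by_cases hx : x = 0
    · simp only [if_pos hx, haa]
      rw [div_pow, _root_.sq_abs]
      field_simp
    · simp only [if_neg hx]
      have harg : Real.cos (2*π*a*x) = Real.cos (b*x) := by
        rw [h2pa]
        rcases abs_cases b with ⟨h, _⟩ | ⟨h, _⟩
        · rw [h]
        · rw [h, neg_mul, Real.cos_neg]
      rw [harg]
      have hx2 : x^2 ≠ 0 := pow_ne_zero 2 hx
      field_simp
  obtain ⟨hint, hval⟩ := core a ha
  rw [heq]
  refine ⟨hint.const_mul _, ?_⟩
  rw [MeasureTheory.integral_const_mul, hval, haa]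
  field_simp

end Aux

theorem stmt3 (u u' : ℝ) :
    MeasureTheory.Integrable (fun x : ℝ =>
      if x = 0 then u * u'
      else Real.sin (π * x * u) * Real.sin (π * x * u') / (π ^ 2 * x ^ 2)) ∧
    (∫ x : ℝ,
      if x = 0 then u * u'
      else Real.sin (π * x * u) * Real.sin (π * x * u') / (π ^ 2 * x ^ 2))
      = (1 / 2) * (|u + u'| - |u - u'|) := by
  have hpi := Real.pi_pos
  obtain ⟨hintp, hvalp⟩ := coreH (π*(u+u'))
  obtain ⟨hintm, hvalm⟩ := coreH (π*(u-u'))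
  have hsplit : (fun x : ℝ =>
      if x = 0 then u * u'
      else Real.sin (π * x * u) * Real.sin (π * x * u') / (π ^ 2 * x ^ 2))
      = fun x : ℝ =>
        ((if x = 0 then (π*(u+u'))^2/2 else (1 - Real.cos (π*(u+u')*x)) / x^2)
          - (if x = 0 then (π*(u-u'))^2/2 else (1 - Real.cos (π*(u-u')*x)) / x^2)) / (2*π^2) := by
    funext x
    by_cases hx : x = 0
    · simp only [if_pos hx]
      field_simp
      ring
    · simp only [if_neg hx]
      have key : Real.cos (π*(u-u')*x) - Real.cos (π*(u+u')*x)
          = 2 * Real.sin (π*x*u) * Real.sin (π*x*u') := by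
        rw [Real.cos_sub_cos,
          show (π*(u-u')*x + π*(u+u')*x)/2 = π*x*u by ring,
          show (π*(u-u')*x - π*(u+u')*x)/2 = -(π*x*u') by ring, Real.sin_neg]
        ring
      rw [div_sub_div_same,
        show (1 - Real.cos (π*(u+u')*x)) - (1 - Real.cos (π*(u-u')*x))
          = Real.cos (π*(u-u')*x) - Real.cos (π*(u+u')*x) by ring, key]
      have hx2 : x^2 ≠ 0 := pow_ne_zero 2 hx
      field_simp
  rw [hsplit]
  refine ⟨(hintp.sub hintm).div_const _, ?_⟩
  rw [MeasureTheory.integral_div, MeasureTheory.integral_sub hintp hintm, hvalp, hvalm,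
    abs_mul, abs_mul, abs_of_pos hpi]
  field_simp
end

section
/- Let U : ℝ → [0,∞) be measurable with ∫_ℝ x²·U(x) dx < ∞. Define φ₀(x,y) := √2·(sin(πx)·sin(2πy) − sin(2πx)·sin(πy)). For ℓ > 0 define f_ℓ : ℝ×[0,1] → ℝ by f_ℓ(u,y) := ℓ·√(U(u))·φ₀(y + u/ℓ, y) whenever 0 ≤ y + u/ℓ ≤ 1, and f_ℓ(u,y) := 0 otherwise; and let g(u,y) := u·√(U(u))·(π/√2)·(3·sin(πy) − sin(3πy)). Then ∫_{ℝ×[0,1]} |f_ℓ(u,y) − g(u,y)|² du dy → 0 as ℓ → ∞. -/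
open MeasureTheory Real Filter


lemma trig_id (y : ℝ) :
    Real.sqrt 2 * (π * Real.cos (π*y) * Real.sin (2*π*y) - 2*π*Real.cos (2*π*y)*Real.sin (π*y))
      = (π / Real.sqrt 2) * (3 * Real.sin (π*y) - Real.sin (3*π*y)) := by
  have h2 : Real.sqrt 2 * Real.sqrt 2 = 2 := Real.mul_self_sqrt (by norm_num)
  have h2' : Real.sqrt 2 ≠ 0 := by positivity
  have h3 : (3:ℝ)*π*y = 2*(π*y) + π*y := by ring
  have h4 : (2:ℝ)*π*y = 2*(π*y) := by ring
  rw [h3, h4, Real.sin_add, Real.sin_two_mul, Real.cos_two_mul]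
  field_simp
  linear_combination (π * Real.cos (π*y) * (2 * Real.sin (π*y) * Real.cos (π*y))
      - 2 * π * (2 * Real.cos (π*y) ^ 2 - 1) * Real.sin (π*y)
      + (2 * Real.sin (π*y) - 2 * Real.sin (π*y) * Real.cos (π*y) ^ 2
        + 2 * π * Real.sin (π*y) * Real.cos (π*y) ^ 2 - 2 * π * Real.sin (π*y))) * h2

lemma sin_lip (a b : ℝ) : |Real.sin a - Real.sin b| ≤ |a - b| := by
  rw [Real.sin_sub_sin]
  calc |2 * Real.sin ((a-b)/2) * Real.cos ((a+b)/2)|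
      = 2 * |Real.sin ((a-b)/2)| * |Real.cos ((a+b)/2)| := by
        rw [abs_mul, abs_mul]; norm_num
    _ ≤ 2 * |(a-b)/2| * 1 := by
        apply mul_le_mul _ (Real.abs_cos_le_one _) (abs_nonneg _) (by positivity)
        exact mul_le_mul_of_nonneg_left Real.abs_sin_le_abs (by norm_num)
    _ = |a - b| := by rw [abs_div]; norm_num; ring

lemma phi_lip (x y : ℝ) :
    |Real.sin (π*x) * Real.sin (2*π*y) - Real.sin (2*π*x) * Real.sin (π*y)| ≤ 3*π*|x - y| := by
  have key : Real.sin (π*x) * Real.sin (2*π*y) - Real.sin (2*π*x) * Real.sin (π*y)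
      = Real.sin (2*π*y) * (Real.sin (π*x) - Real.sin (π*y))
        + Real.sin (π*y) * (Real.sin (2*π*y) - Real.sin (2*π*x)) := by ring
  have habs : ∀ t : ℝ, |Real.sin t| ≤ 1 := fun t =>
    abs_le.2 ⟨Real.neg_one_le_sin t, Real.sin_le_one t⟩
  rw [key]
  have b1 : |Real.sin (2*π*y) * (Real.sin (π*x) - Real.sin (π*y))| ≤ |π*x - π*y| := by
    rw [abs_mul]
    calc |Real.sin (2*π*y)| * |Real.sin (π*x) - Real.sin (π*y)|
        ≤ 1 * |π*x - π*y| :=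
          mul_le_mul (habs _) (sin_lip _ _) (abs_nonneg _) zero_le_one
      _ = |π*x - π*y| := one_mul _
  have b2 : |Real.sin (π*y) * (Real.sin (2*π*y) - Real.sin (2*π*x))| ≤ |2*π*y - 2*π*x| := by
    rw [abs_mul]
    calc |Real.sin (π*y)| * |Real.sin (2*π*y) - Real.sin (2*π*x)|
        ≤ 1 * |2*π*y - 2*π*x| :=
          mul_le_mul (habs _) (sin_lip _ _) (abs_nonneg _) zero_le_one
      _ = |2*π*y - 2*π*x| := one_mul _
  have e1 : |π*x - π*y| = π * |x-y| := by
    rw [show π*x - π*y = π*(x-y) by ring, abs_mul, abs_of_pos Real.pi_pos]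
  have e2 : |2*π*y - 2*π*x| = 2*π*|x-y| := by
    rw [show 2*π*y - 2*π*x = (2*π)*(-(x-y)) by ring, abs_mul, abs_neg,
      abs_of_pos (by positivity : (0:ℝ) < 2*π)]
  calc |_| ≤ |Real.sin (2*π*y) * (Real.sin (π*x) - Real.sin (π*y))|
        + |Real.sin (π*y) * (Real.sin (2*π*y) - Real.sin (2*π*x))| := abs_add_le _ _
    _ ≤ |π*x - π*y| + |2*π*y - 2*π*x| := add_le_add b1 b2
    _ = 3*π*|x-y| := by rw [e1, e2]; ring

/-- The rescaled profile `f_ℓ(u,y) = ℓ·√U(u)·φ₀(y+u/ℓ, y)` of the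
free two-fermion ground state `φ₀` converges in `L²(ℝ×[0,1])` to
`g(u,y) = u·√U(u)·(π/√2)·(3 sin(πy) − sin(3πy))` as `ℓ → ∞`. -/
theorem stmt5
    (U : ℝ → ℝ) (hUmeas : Measurable U) (hUnonneg : ∀ x, 0 ≤ U x)
    (hU2 : Integrable (fun x => x ^ 2 * U x)) :
    Tendsto (fun ℓ : ℝ =>
      ∫ q in (Set.univ ×ˢ Set.Icc (0:ℝ) 1 : Set (ℝ × ℝ)),
        ((if 0 ≤ q.2 + q.1 / ℓ ∧ q.2 + q.1 / ℓ ≤ 1 then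
            ℓ * Real.sqrt (U q.1) *
              (Real.sqrt 2 * (Real.sin (π * (q.2 + q.1 / ℓ)) * Real.sin (2 * π * q.2)
                - Real.sin (2 * π * (q.2 + q.1 / ℓ)) * Real.sin (π * q.2)))
          else 0)
         - q.1 * Real.sqrt (U q.1) * (π / Real.sqrt 2)
             * (3 * Real.sin (π * q.2) - Real.sin (3 * π * q.2))) ^ 2)
      atTop (nhds 0) := by
  have hSmeas : MeasurableSet (Set.univ ×ˢ Set.Icc (0:ℝ) 1 : Set (ℝ × ℝ)) :=
    MeasurableSet.univ.prod measurableSet_Icc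
  set μ : Measure (ℝ × ℝ) := volume.restrict (Set.univ ×ˢ Set.Icc (0:ℝ) 1) with hμ
  set g : ℝ × ℝ → ℝ := fun q => q.1 * Real.sqrt (U q.1) * (π / Real.sqrt 2)
      * (3 * Real.sin (π * q.2) - Real.sin (3 * π * q.2)) with hg
  set F : ℝ → ℝ × ℝ → ℝ := fun ℓ q =>
      ((if 0 ≤ q.2 + q.1 / ℓ ∧ q.2 + q.1 / ℓ ≤ 1 then
            ℓ * Real.sqrt (U q.1) *
              (Real.sqrt 2 * (Real.sin (π * (q.2 + q.1 / ℓ)) * Real.sin (2 * π * q.2)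
                - Real.sin (2 * π * (q.2 + q.1 / ℓ)) * Real.sin (π * q.2)))
          else 0) - g q) ^ 2 with hF
  have main : Tendsto (fun ℓ : ℝ => ∫ q, F ℓ q ∂μ) atTop (nhds (∫ _ : ℝ × ℝ, (0:ℝ) ∂μ)) := by
    apply tendsto_integral_filter_of_dominated_convergence
      (fun q : ℝ × ℝ => 50 * π ^ 2 * (q.1 ^ 2 * U q.1))
    · -- measurability
      refine Eventually.of_forall fun ℓ => Measurable.aestronglyMeasurable ?_
      apply Measurable.pow_const
      apply Measurable.sub
      · apply Measurable.ite
        · exact (measurableSet_le measurable_const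
            (measurable_snd.add (measurable_fst.div_const ℓ))).inter
            (measurableSet_le (measurable_snd.add (measurable_fst.div_const ℓ))
              measurable_const)
        · exact (measurable_const.mul ((hUmeas.comp measurable_fst).sqrt)).mul
            ((measurable_const.mul
              (((Real.continuous_sin.measurable.comp
                  ((measurable_const.mul (measurable_snd.add (measurable_fst.div_const ℓ)))
                    )).mul
                (Real.continuous_sin.measurable.comp (measurable_const.mul measurable_snd))).sub
              ((Real.continuous_sin.measurable.comp
                  (measurable_const.mul (measurable_snd.add (measurable_fst.div_const ℓ)))).mul
                (Real.continuous_sin.measurable.comp (measurable_const.mul measurable_snd))))))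
        · exact measurable_const
      · exact ((measurable_fst.mul ((hUmeas.comp measurable_fst).sqrt)).mul
          measurable_const).mul
          ((measurable_const.mul
            (Real.continuous_sin.measurable.comp (measurable_const.mul measurable_snd))).sub
            (Real.continuous_sin.measurable.comp (measurable_const.mul measurable_snd)))
    · -- bound
      filter_upwards [eventually_ge_atTop (1:ℝ)] with ℓ hℓ
      refine Eventually.of_forall fun q => ?_
      have hℓ0 : (0:ℝ) < ℓ := lt_of_lt_of_le one_pos hℓ
      have hsqrtU : (0:ℝ) ≤ Real.sqrt (U q.1) := Real.sqrt_nonneg _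
      have hsqU : Real.sqrt (U q.1) ^ 2 = U q.1 := Real.sq_sqrt (hUnonneg q.1)
      have h2 : Real.sqrt 2 * Real.sqrt 2 = 2 := Real.mul_self_sqrt (by norm_num)
      have habs : ∀ t : ℝ, |Real.sin t| ≤ 1 := fun t =>
        abs_le.2 ⟨Real.neg_one_le_sin t, Real.sin_le_one t⟩
      have hfb : |(if 0 ≤ q.2 + q.1 / ℓ ∧ q.2 + q.1 / ℓ ≤ 1 then
            ℓ * Real.sqrt (U q.1) *
              (Real.sqrt 2 * (Real.sin (π * (q.2 + q.1 / ℓ)) * Real.sin (2 * π * q.2)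
                - Real.sin (2 * π * (q.2 + q.1 / ℓ)) * Real.sin (π * q.2)))
          else 0)| ≤ 3 * Real.sqrt 2 * π * (|q.1| * Real.sqrt (U q.1)) := by
        split
        · rw [abs_mul, abs_mul, abs_mul,
            abs_of_pos hℓ0, abs_of_nonneg hsqrtU, abs_of_nonneg (Real.sqrt_nonneg 2)]
          have hlip := phi_lip (q.2 + q.1 / ℓ) q.2
          have harg : |q.2 + q.1 / ℓ - q.2| = |q.1| / ℓ := by
            rw [show q.2 + q.1 / ℓ - q.2 = q.1 / ℓ by ring, abs_div, abs_of_pos hℓ0]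
          rw [harg] at hlip
          calc ℓ * Real.sqrt (U q.1) * (Real.sqrt 2 *
              |Real.sin (π * (q.2 + q.1 / ℓ)) * Real.sin (2 * π * q.2)
                - Real.sin (2 * π * (q.2 + q.1 / ℓ)) * Real.sin (π * q.2)|)
              ≤ ℓ * Real.sqrt (U q.1) * (Real.sqrt 2 * (3 * π * (|q.1| / ℓ))) := by
                apply mul_le_mul_of_nonneg_left _ (by positivity)
                exact mul_le_mul_of_nonneg_left hlip (Real.sqrt_nonneg 2)
            _ = 3 * Real.sqrt 2 * π * (|q.1| * Real.sqrt (U q.1)) := by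
                field_simp
        · simpa using by positivity
      have hgb : |g q| ≤ 2 * Real.sqrt 2 * π * (|q.1| * Real.sqrt (U q.1)) := by
        rw [hg]
        simp only
        rw [abs_mul, abs_mul, abs_mul, abs_of_nonneg hsqrtU,
          abs_of_pos (div_pos Real.pi_pos (Real.sqrt_pos.mpr (by norm_num)))]
        have hb4 : |3 * Real.sin (π * q.2) - Real.sin (3 * π * q.2)| ≤ 4 := by
          calc |3 * Real.sin (π * q.2) - Real.sin (3 * π * q.2)|
              ≤ |3 * Real.sin (π * q.2)| + |Real.sin (3 * π * q.2)| := abs_sub _ _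
            _ ≤ 3 * 1 + 1 := by
                rw [abs_mul]
                exact add_le_add (by
                  have := habs (π * q.2)
                  calc |(3:ℝ)| * |Real.sin (π * q.2)| = 3 * |Real.sin (π * q.2)| := by norm_num
                    _ ≤ 3 * 1 := by linarith) (habs _)
            _ = 4 := by norm_num
        calc |q.1| * Real.sqrt (U q.1) * (π / Real.sqrt 2)
              * |3 * Real.sin (π * q.2) - Real.sin (3 * π * q.2)|
            ≤ |q.1| * Real.sqrt (U q.1) * (π / Real.sqrt 2) * 4 := by
              apply mul_le_mul_of_nonneg_left hb4 (by positivity)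
          _ = 2 * Real.sqrt 2 * π * (|q.1| * Real.sqrt (U q.1)) := by
              have h2sq : Real.sqrt 2 ^ 2 = 2 := Real.sq_sqrt (by norm_num)
              field_simp
              linear_combination (-(2 * (|q.1| * Real.sqrt (U q.1)))) * h2sq
      have hdiff : |(if 0 ≤ q.2 + q.1 / ℓ ∧ q.2 + q.1 / ℓ ≤ 1 then
            ℓ * Real.sqrt (U q.1) *
              (Real.sqrt 2 * (Real.sin (π * (q.2 + q.1 / ℓ)) * Real.sin (2 * π * q.2)
                - Real.sin (2 * π * (q.2 + q.1 / ℓ)) * Real.sin (π * q.2)))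
          else 0) - g q| ≤ 5 * Real.sqrt 2 * π * (|q.1| * Real.sqrt (U q.1)) := by
        calc |_| ≤ _ + _ := abs_sub _ _
          _ ≤ 3 * Real.sqrt 2 * π * (|q.1| * Real.sqrt (U q.1))
              + 2 * Real.sqrt 2 * π * (|q.1| * Real.sqrt (U q.1)) := add_le_add hfb hgb
          _ = 5 * Real.sqrt 2 * π * (|q.1| * Real.sqrt (U q.1)) := by ring
      rw [hF]
      simp only [Real.norm_eq_abs]
      rw [abs_of_nonneg (sq_nonneg _), ← sq_abs]
      calc |_| ^ 2 ≤ (5 * Real.sqrt 2 * π * (|q.1| * Real.sqrt (U q.1))) ^ 2 := by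
            apply pow_le_pow_left₀ (abs_nonneg _) hdiff
        _ = 50 * π ^ 2 * (q.1 ^ 2 * U q.1) := by
            rw [mul_pow, mul_pow, mul_pow, mul_pow, sq_abs, hsqU,
              Real.sq_sqrt (by norm_num : (0:ℝ) ≤ 2)]
            ring
    · -- integrability of the bound
      rw [hμ, Measure.volume_eq_prod, ← Measure.prod_restrict, Measure.restrict_univ]
      have h1 : Integrable (fun u : ℝ => 50 * π ^ 2 * (u ^ 2 * U u)) volume :=
        hU2.const_mul _
      have h2 : Integrable (fun _ : ℝ => (1:ℝ)) (volume.restrict (Set.Icc (0:ℝ) 1)) := by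
        rw [integrable_const_iff]
        right
        constructor
        rw [Measure.restrict_apply_univ]
        exact lt_of_le_of_lt (le_of_eq Real.volume_Icc) (by norm_num)
      have := h1.mul_prod h2
      simpa using this
    · -- a.e. pointwise convergence
      have hae1 : ∀ᵐ q ∂μ, q ∈ (Set.univ ×ˢ Set.Icc (0:ℝ) 1 : Set (ℝ × ℝ)) :=
        ae_restrict_mem hSmeas
      have hnull : (volume : Measure (ℝ × ℝ)) {q : ℝ × ℝ | q.2 = 0 ∨ q.2 = 1} = 0 := by
        have hset : {q : ℝ × ℝ | q.2 = 0 ∨ q.2 = 1}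
            = Set.univ ×ˢ ({0, 1} : Set ℝ) := by
          ext q; simp [Set.mem_prod]
        rw [hset, Measure.volume_eq_prod, Measure.prod_prod]
        rw [(Set.finite_singleton (1:ℝ)).insert 0 |>.measure_zero volume]
        simp
      have hae2 : ∀ᵐ q ∂μ, ¬(q.2 = 0 ∨ q.2 = 1) := by
        apply ae_restrict_of_ae
        rw [ae_iff]
        have hs : {q : ℝ × ℝ | ¬¬(q.2 = 0 ∨ q.2 = 1)} = {q : ℝ × ℝ | q.2 = 0 ∨ q.2 = 1} := by
          ext q; simp only [Set.mem_setOf_eq, not_not]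
        rw [hs]; exact hnull
      filter_upwards [hae1, hae2] with q hqS hq2
      obtain ⟨-, hy⟩ := hqS
      push_neg at hq2
      have hy0 : 0 < q.2 := lt_of_le_of_ne hy.1 (Ne.symm hq2.1)
      have hy1 : q.2 < 1 := lt_of_le_of_ne hy.2 hq2.2
      -- notation
      set u := q.1 with hu
      set y := q.2 with hyy
      -- the rescaled profile as a function of t = 1/ℓ
      set ψ : ℝ → ℝ := fun t => Real.sqrt 2 *
        (Real.sin (π * (y + u * t)) * Real.sin (2 * π * y)
          - Real.sin (2 * π * (y + u * t)) * Real.sin (π * y)) with hψdef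
      set d : ℝ := Real.sqrt 2 * ((Real.cos (π * y) * (π * u)) * Real.sin (2 * π * y)
          - (Real.cos (2 * π * y) * (2 * π * u)) * Real.sin (π * y)) with hd
      have hψ : HasDerivAt ψ d 0 := by
        have hin : HasDerivAt (fun t : ℝ => y + u * t) u 0 := by
          simpa using ((hasDerivAt_id 0).const_mul u).const_add y
        have hin1 : HasDerivAt (fun t : ℝ => π * (y + u * t)) (π * u) 0 := by
          simpa using hin.const_mul π
        have hin2 : HasDerivAt (fun t : ℝ => 2 * π * (y + u * t)) (2 * π * u) 0 := by
          have := hin.const_mul (2 * π)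
          simpa [mul_assoc] using this
        have hs1 : HasDerivAt (fun t : ℝ => Real.sin (π * (y + u * t)))
            (Real.cos (π * y) * (π * u)) 0 := by
          have := (Real.hasDerivAt_sin (π * (y + u * 0))).comp 0 hin1
          simpa [Function.comp_def] using this
        have hs2 : HasDerivAt (fun t : ℝ => Real.sin (2 * π * (y + u * t)))
            (Real.cos (2 * π * y) * (2 * π * u)) 0 := by
          have := (Real.hasDerivAt_sin (2 * π * (y + u * 0))).comp 0 hin2
          simpa [Function.comp_def] using this
        exact ((hs1.mul_const (Real.sin (2 * π * y))).sub
          (hs2.mul_const (Real.sin (π * y)))).const_mul (Real.sqrt 2)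
      have hψ0 : ψ 0 = 0 := by
        rw [hψdef]; simp; ring_nf
      have hslope : Tendsto (slope ψ 0) (nhdsWithin 0 {(0:ℝ)}ᶜ) (nhds d) :=
        hasDerivAt_iff_tendsto_slope.mp hψ
      have hinv : Tendsto (fun ℓ : ℝ => ℓ⁻¹) atTop (nhdsWithin 0 {(0:ℝ)}ᶜ) := by
        apply tendsto_nhdsWithin_of_tendsto_nhds_of_eventually_within _ tendsto_inv_atTop_zero
        filter_upwards [eventually_gt_atTop (0:ℝ)] with ℓ hℓ
        simpa using (inv_pos.mpr hℓ).ne'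
      have hcomp : Tendsto (fun ℓ : ℝ => slope ψ 0 ℓ⁻¹) atTop (nhds d) := hslope.comp hinv
      have heq : ∀ᶠ ℓ : ℝ in atTop, slope ψ 0 ℓ⁻¹ = ℓ * ψ ℓ⁻¹ := by
        filter_upwards [eventually_gt_atTop (0:ℝ)] with ℓ hℓ
        rw [slope_def_field, hψ0, sub_zero, sub_zero, div_eq_mul_inv, inv_inv, mul_comm]
      have hmain : Tendsto (fun ℓ : ℝ => ℓ * ψ ℓ⁻¹) atTop (nhds d) := hcomp.congr' heq
      -- eventually the indicator condition holds
      have hA : Tendsto (fun ℓ : ℝ => y + u / ℓ) atTop (nhds y) := by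
        have : Tendsto (fun ℓ : ℝ => u / ℓ) atTop (nhds 0) := by
          simpa [div_eq_mul_inv] using tendsto_inv_atTop_zero.const_mul u
        simpa using tendsto_const_nhds.add this
      have hcond : ∀ᶠ ℓ : ℝ in atTop, 0 ≤ y + u / ℓ ∧ y + u / ℓ ≤ 1 := by
        filter_upwards [hA (Ioo_mem_nhds hy0 hy1)] with ℓ hℓ
        exact ⟨le_of_lt hℓ.1, le_of_lt hℓ.2⟩
      -- identify the limit value
      have hdg : Real.sqrt (U u) * d = g q := by
        rw [hd, hg]
        simp only [← hu, ← hyy]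
        linear_combination (Real.sqrt (U u) * u) * trig_id y
      have hlim : Tendsto (fun ℓ : ℝ => F ℓ q) atTop (nhds 0) := by
        have h1 : Tendsto (fun ℓ : ℝ => (Real.sqrt (U u) * (ℓ * ψ ℓ⁻¹) - g q) ^ 2)
            atTop (nhds ((Real.sqrt (U u) * d - g q) ^ 2)) :=
          (((hmain.const_mul (Real.sqrt (U u))).sub tendsto_const_nhds).pow 2)
        rw [hdg, sub_self] at h1
        norm_num at h1
        refine h1.congr' ?_
        filter_upwards [hcond, eventually_gt_atTop (0:ℝ)] with ℓ hcℓ hℓ0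
        rw [hF]
        simp only
        rw [if_pos hcℓ, hψdef]
        have harg : y + u / ℓ = y + u * ℓ⁻¹ := by rw [div_eq_mul_inv]
        simp only [← harg]
        ring
      exact hlim
  have hzero : (∫ _ : ℝ × ℝ, (0:ℝ) ∂μ) = 0 := integral_zero _ _
  rw [hzero] at main
  exact main
end

section
/- There exists a universal constant C > 0 such that for every integer k ≥ 1, every ℓ > 0 and all u, u′ ∈ [−ℓ, ℓ]: | L_k^ℓ(u,u′) − (1/4)·( |u+u′| − |u−u′| ) | ≤ C·k·|u|·|u′| / ℓ, where L_k^ℓ(u,u′) := ℓ · Σ_{j ≥ 1, (j,k) ≠ (1,1)} sin(π(2j+k)u/(2ℓ))·sin(π(2j+k)u′/(2ℓ)) / ( π²·(j + k/2)² ) (the series converges absolutely). -/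
open Real

lemma bern2 (t : ℝ) : (Polynomial.map (algebraMap ℚ ℝ) (Polynomial.bernoulli 2)).eval t = t^2 - t + 1/6 := by
  simp [Polynomial.bernoulli, Finset.sum_range_succ, bernoulli, bernoulli'_two]
  ring

lemma cosSum (θ : ℝ) (h0 : 0 ≤ θ) (h2 : θ ≤ 2*π) :
    HasSum (fun n : ℕ => Real.cos ((n:ℝ)*θ) / (n:ℝ)^2) (π^2/6 - π*θ/2 + θ^2/4) := by
  have hπ := Real.pi_pos
  have hx : θ/(2*π) ∈ Set.Icc (0:ℝ) 1 := ⟨by positivity, by rw [div_le_one (by positivity)]; linarith⟩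
  have h := hasSum_one_div_nat_pow_mul_cos (k := 1) one_ne_zero hx
  have e1 : ∀ n : ℕ, 1 / (n:ℝ) ^ (2*1) * Real.cos (2 * π * n * (θ/(2*π)))
      = Real.cos ((n:ℝ)*θ) / (n:ℝ)^2 := by
    intro n
    rw [one_div, inv_mul_eq_div]
    congr 2
    · field_simp
  have e2 : ((-1:ℝ)) ^ (1 + 1) * (2 * π) ^ (2 * 1) / 2 / ((2 * 1).factorial : ℝ) *
      (Polynomial.map (algebraMap ℚ ℝ) (Polynomial.bernoulli (2 * 1))).eval (θ/(2*π))
      = π^2/6 - π*θ/2 + θ^2/4 := by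
    rw [show (2*1) = 2 from rfl, bern2]
    simp [Nat.factorial]
    field_simp
    ring
  rw [← e2]
  exact (funext e1 : _) ▸ h

lemma sinSum (x y : ℝ) (h : |x| + |y| ≤ 2*π) :
    HasSum (fun n : ℕ => Real.sin ((n:ℝ)*x) * Real.sin ((n:ℝ)*y) / (n:ℝ)^2)
      (π/4 * (|x+y| - |x-y|) - x*y/2) := by
  have hxy1 : |x - y| ≤ 2*π := le_trans (abs_sub _ _) h
  have hxy2 : |x + y| ≤ 2*π := le_trans (abs_add_le x y) h
  have h1 := cosSum |x-y| (abs_nonneg _) hxy1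
  have h2 := cosSum |x+y| (abs_nonneg _) hxy2
  have h3 := (h1.sub h2).div_const 2
  have key : ∀ n : ℕ, (Real.cos ((n:ℝ)*|x-y|) / (n:ℝ)^2 - Real.cos ((n:ℝ)*|x+y|) / (n:ℝ)^2) / 2
      = Real.sin ((n:ℝ)*x) * Real.sin ((n:ℝ)*y) / (n:ℝ)^2 := by
    intro n
    have c1 : Real.cos ((n:ℝ)*|x-y|) = Real.cos ((n:ℝ)*(x-y)) := by
      rcases abs_cases (x - y) with ⟨h', _⟩ | ⟨h', _⟩ <;> rw [h']
      rw [mul_neg, Real.cos_neg]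
    have c2 : Real.cos ((n:ℝ)*|x+y|) = Real.cos ((n:ℝ)*(x+y)) := by
      rcases abs_cases (x + y) with ⟨h', _⟩ | ⟨h', _⟩ <;> rw [h']
      rw [mul_neg, Real.cos_neg]
    have c3 : Real.cos ((n:ℝ)*(x-y)) - Real.cos ((n:ℝ)*(x+y))
        = 2 * (Real.sin ((n:ℝ)*x) * Real.sin ((n:ℝ)*y)) := by
      rw [Real.cos_sub_cos,
        show ((n:ℝ)*(x-y) + (n:ℝ)*(x+y))/2 = (n:ℝ)*x by ring,
        show ((n:ℝ)*(x-y) - (n:ℝ)*(x+y))/2 = -((n:ℝ)*y) by ring,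
        Real.sin_neg]
      ring
    rw [c1, c2, div_sub_div_same, c3]
    ring
  have hval : (π^2/6 - π*|x-y|/2 + |x-y|^2/4 - (π^2/6 - π*|x+y|/2 + |x+y|^2/4)) / 2
      = π/4 * (|x+y| - |x-y|) - x*y/2 := by
    rw [sq_abs, sq_abs]
    ring
  rw [← hval]
  exact (funext key : _) ▸ h3

lemma keyAux (p u v L n d : ℝ) (hp : p ≠ 0) (hd : d ≠ 0) (hnd : n = 2*d) :
    Real.sin (p*n*u/(2*L)) * Real.sin (p*n*v/(2*L)) / (p^2*d^2)
      = 4/p^2 * (Real.sin (n*(p*u/(2*L))) * Real.sin (n*(p*v/(2*L))) / n^2) := by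
  rw [show p*n*u/(2*L) = n*(p*u/(2*L)) by ring, show p*n*v/(2*L) = n*(p*v/(2*L)) by ring, hnd]
  field_simp
  ring

lemma shiftSum (F g : ℕ → ℝ) (S : ℝ) (s t : ℕ) (hg : HasSum g S)
    (ht0 : ∀ j < t, F j = 0) (key : ∀ i, F (i+t) = 4/π^2 * g (i+s)) :
    HasSum F (4/π^2 * (S - ∑ i ∈ Finset.range s, g i)) := by
  have h1 : HasSum (fun i => g (i+s)) (S - ∑ i ∈ Finset.range s, g i) :=
    (hasSum_nat_add_iff s).mpr (by rwa [sub_add_cancel])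
  have h2 : HasSum (fun i => F (i+t)) (4/π^2 * (S - ∑ i ∈ Finset.range s, g i)) := by
    simp only [key]
    exact h1.mul_left _
  have h3 := (hasSum_nat_add_iff t).mp h2
  have h4 : ∑ i ∈ Finset.range t, F i = 0 :=
    Finset.sum_eq_zero fun j hj => ht0 j (Finset.mem_range.mp hj)
  rwa [h4, add_zero] at h3

/-- Uniform approximation of the diagonal block `L_k^ℓ` of the free
two-particle resolvent kernel by the limiting kernel `(1/4)(|u+u'| − |u−u'|)`. -/
theorem stmt6 :
    ∃ C : ℝ, 0 < C ∧
      ∀ (k : ℕ), 1 ≤ k → ∀ (ℓ : ℝ), 0 < ℓ →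
        ∀ u u' : ℝ, u ∈ Set.Icc (-ℓ) ℓ → u' ∈ Set.Icc (-ℓ) ℓ →
          Summable (fun j : ℕ =>
            |if 1 ≤ j ∧ ¬(j = 1 ∧ k = 1) then
                Real.sin (π * (2 * (j : ℝ) + (k : ℝ)) * u / (2 * ℓ))
                  * Real.sin (π * (2 * (j : ℝ) + (k : ℝ)) * u' / (2 * ℓ))
                  / (π ^ 2 * ((j : ℝ) + (k : ℝ) / 2) ^ 2)
              else 0|) ∧
          |ℓ * (∑' j : ℕ,
              if 1 ≤ j ∧ ¬(j = 1 ∧ k = 1) then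
                Real.sin (π * (2 * (j : ℝ) + (k : ℝ)) * u / (2 * ℓ))
                  * Real.sin (π * (2 * (j : ℝ) + (k : ℝ)) * u' / (2 * ℓ))
                  / (π ^ 2 * ((j : ℝ) + (k : ℝ) / 2) ^ 2)
              else 0)
            - (1 / 4) * (|u + u'| - |u - u'|)|
            ≤ C * (k : ℝ) * |u| * |u'| / ℓ := by
  refine ⟨4, by norm_num, ?_⟩
  intro k hk ℓ hℓ u u' hu hu'
  have hπ := Real.pi_pos
  have huabs : |u| ≤ ℓ := abs_le.mpr ⟨hu.1, hu.2⟩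
  have hu'abs : |u'| ≤ ℓ := abs_le.mpr ⟨hu'.1, hu'.2⟩
  set F : ℕ → ℝ := fun j : ℕ =>
    if 1 ≤ j ∧ ¬(j = 1 ∧ k = 1) then
      Real.sin (π * (2 * (j : ℝ) + (k : ℝ)) * u / (2 * ℓ))
        * Real.sin (π * (2 * (j : ℝ) + (k : ℝ)) * u' / (2 * ℓ))
        / (π ^ 2 * ((j : ℝ) + (k : ℝ) / 2) ^ 2)
    else 0 with hFdef
  set x : ℝ := π * u / (2 * ℓ) with hxdef
  set y : ℝ := π * u' / (2 * ℓ) with hydef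
  set c : ℕ → ℝ := fun n : ℕ => Real.sin ((n:ℝ)*x) * Real.sin ((n:ℝ)*y) / (n:ℝ)^2 with hcdef
  have hxabs : |x| = π/(2*ℓ) * |u| := by
    rw [hxdef, show π * u / (2*ℓ) = π/(2*ℓ) * u by ring, abs_mul,
      abs_of_pos (by positivity : (0:ℝ) < π/(2*ℓ))]
  have hyabs : |y| = π/(2*ℓ) * |u'| := by
    rw [hydef, show π * u' / (2*ℓ) = π/(2*ℓ) * u' by ring, abs_mul,
      abs_of_pos (by positivity : (0:ℝ) < π/(2*ℓ))]
  have hxle : |x| ≤ π/2 := by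
    rw [hxabs, show π/2 = π/(2*ℓ) * ℓ by field_simp]
    exact mul_le_mul_of_nonneg_left huabs (by positivity)
  have hyle : |y| ≤ π/2 := by
    rw [hyabs, show π/2 = π/(2*ℓ) * ℓ by field_simp]
    exact mul_le_mul_of_nonneg_left hu'abs (by positivity)
  -- the three basic sums
  have hfull : HasSum c (π/4 * (|x+y| - |x-y|) - x*y/2) := sinSum x y (by linarith)
  have heven : HasSum (fun m : ℕ => c (2*m)) (π/8 * (|x+y| - |x-y|) - x*y/2) := by
    have h2 := (sinSum (2*x) (2*y) (by rw [abs_mul, abs_mul, abs_two]; linarith)).div_const 4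
    have hv : (π/4 * (|2*x+2*y| - |2*x-2*y|) - (2*x)*(2*y)/2) / 4
        = π/8 * (|x+y| - |x-y|) - x*y/2 := by
      rw [show 2*x+2*y = 2*(x+y) by ring, show 2*x-2*y = 2*(x-y) by ring,
        abs_mul, abs_mul, abs_two]
      ring
    rw [hv] at h2
    have eq : ∀ m : ℕ, Real.sin ((m:ℝ)*(2*x)) * Real.sin ((m:ℝ)*(2*y)) / (m:ℝ)^2 / 4
        = c (2*m) := by
      intro m
      simp only [hcdef]
      push_cast
      rw [div_div, show (m:ℝ)*(2*x) = 2*(m:ℝ)*x by ring, show (m:ℝ)*(2*y) = 2*(m:ℝ)*y by ring]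
      congr 1
      ring
    exact (funext eq : _) ▸ h2
  have csumm : Summable c := hfull.summable
  have hodd : HasSum (fun m : ℕ => c (2*m+1)) (π/8 * (|x+y| - |x-y|)) := by
    have hso : Summable (fun m : ℕ => c (2*m+1)) :=
      csumm.comp_injective (fun a b h => by omega)
    have hodd0 := hso.hasSum
    have huniq := hfull.unique (heven.even_add_odd hodd0)
    have hval : ∑' m : ℕ, c (2*m+1) = π/8 * (|x+y| - |x-y|) := by linarith
    rwa [hval] at hodd0
  -- bound on individual terms
  have sinle : ∀ z : ℝ, |Real.sin z| ≤ |z| := fun z => Real.abs_sin_le_abs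
  have cbound : ∀ n : ℕ, |c n| ≤ |x| * |y| := by
    intro n
    rcases Nat.eq_zero_or_pos n with hn | hn
    · subst hn; simp [hcdef]; positivity
    · have hn1 : (1:ℝ) ≤ (n:ℝ) := by exact_mod_cast hn
      have h0 : (0:ℝ) < (n:ℝ)^2 := by positivity
      have h1 : |Real.sin ((n:ℝ)*x)| ≤ (n:ℝ)*|x| :=
        (sinle _).trans_eq (by rw [abs_mul, Nat.abs_cast])
      have h2 : |Real.sin ((n:ℝ)*y)| ≤ (n:ℝ)*|y| :=
        (sinle _).trans_eq (by rw [abs_mul, Nat.abs_cast])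
      calc |c n| = |Real.sin ((n:ℝ)*x) * Real.sin ((n:ℝ)*y)| / (n:ℝ)^2 := by
            simp only [hcdef]; rw [abs_div, abs_of_pos h0]
        _ ≤ ((n:ℝ)*|x|) * ((n:ℝ)*|y|) / (n:ℝ)^2 := by
            apply (div_le_div_iff_of_pos_right h0).mpr
            rw [abs_mul]
            exact mul_le_mul h1 h2 (abs_nonneg _) (by positivity)
        _ = |x| * |y| := by field_simp
  have hℓ0 : ℓ ≠ 0 := ne_of_gt hℓ
  have hπ0 : π ≠ 0 := ne_of_gt hπ
  constructor
  · -- Summability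
    have hgsum : Summable (fun j : ℕ => 1/π^2 * (1/(j:ℝ)^2)) :=
      (summable_one_div_nat_pow.mpr one_lt_two).mul_left _
    apply Summable.of_nonneg_of_le (fun j => abs_nonneg _) ?_ hgsum
    intro j
    by_cases hcnd : 1 ≤ j ∧ ¬(j = 1 ∧ k = 1)
    · rw [if_pos hcnd]
      have hj1 : (1:ℝ) ≤ (j:ℝ) := by exact_mod_cast hcnd.1
      have hk0 : (0:ℝ) ≤ (k:ℝ) := Nat.cast_nonneg k
      have hden : (0:ℝ) < π^2 * ((j:ℝ) + (k:ℝ)/2)^2 := by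
        have : (0:ℝ) < (j:ℝ) + (k:ℝ)/2 := by linarith
        positivity
      have step1 : |Real.sin (π * (2 * (j:ℝ) + (k:ℝ)) * u / (2 * ℓ))
          * Real.sin (π * (2 * (j:ℝ) + (k:ℝ)) * u' / (2 * ℓ))| ≤ 1 := by
        rw [abs_mul]
        exact mul_le_one₀ (Real.abs_sin_le_one _) (abs_nonneg _) (Real.abs_sin_le_one _)
      have step2 : π^2 * (j:ℝ)^2 ≤ π^2 * ((j:ℝ) + (k:ℝ)/2)^2 := by
        apply mul_le_mul_of_nonneg_left _ (by positivity)
        apply pow_le_pow_left₀ (by linarith) (by linarith)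
      calc |Real.sin (π * (2 * (j:ℝ) + (k:ℝ)) * u / (2 * ℓ))
            * Real.sin (π * (2 * (j:ℝ) + (k:ℝ)) * u' / (2 * ℓ))
            / (π ^ 2 * ((j:ℝ) + (k:ℝ) / 2) ^ 2)|
          = |Real.sin (π * (2 * (j:ℝ) + (k:ℝ)) * u / (2 * ℓ))
            * Real.sin (π * (2 * (j:ℝ) + (k:ℝ)) * u' / (2 * ℓ))|
            / (π ^ 2 * ((j:ℝ) + (k:ℝ) / 2) ^ 2) := by
            rw [abs_div, abs_of_pos hden]
        _ ≤ 1 / (π^2 * (j:ℝ)^2) := by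
            apply div_le_div₀ zero_le_one step1 (by positivity) step2
        _ = 1/π^2 * (1/(j:ℝ)^2) := (one_div_mul_one_div _ _).symm
    · rw [if_neg hcnd]
      simp only [abs_zero]
      positivity
  -- main estimate
  have hEb : ∀ (s : ℕ) (g : ℕ → ℝ), (∀ i, |g i| ≤ |x| * |y|) →
      |∑ i ∈ Finset.range s, g i| ≤ (s:ℝ)*(|x| * |y|) := by
    intro s g hg
    calc |∑ i ∈ Finset.range s, g i| ≤ ∑ i ∈ Finset.range s, |g i| :=
          Finset.abs_sum_le_sum_abs _ _
      _ ≤ ∑ _i ∈ Finset.range s, (|x| * |y|) := Finset.sum_le_sum (fun i _ => hg i)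
      _ = (s:ℝ)*(|x| * |y|) := by rw [Finset.sum_const, Finset.card_range, nsmul_eq_mul]
  have hPb : ∀ (s : ℕ) (g : ℕ → ℝ), (∀ i, |g i| ≤ |x| * |y|) →
      |ℓ*(4/π^2*(∑ i ∈ Finset.range s, g i))| ≤ (s:ℝ)*(|u| * |u'|)/ℓ := by
    intro s g hg
    have h1 := hEb s g hg
    calc |ℓ*(4/π^2*(∑ i ∈ Finset.range s, g i))|
        = ℓ*((4/π^2)*|∑ i ∈ Finset.range s, g i|) := by
          rw [abs_mul, abs_mul, abs_of_pos hℓ, abs_of_pos (show (0:ℝ) < 4/π^2 by positivity)]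
      _ ≤ ℓ*((4/π^2)*((s:ℝ)*(|x| * |y|))) :=
          mul_le_mul_of_nonneg_left (mul_le_mul_of_nonneg_left h1 (by positivity)) (le_of_lt hℓ)
      _ = (s:ℝ)*(|u| * |u'|)/ℓ := by rw [hxabs, hyabs]; field_simp; ring
  have hidA : ℓ * (4/π^2 * (π/8*(|x+y| - |x-y|))) = 1/4*(|u+u'| - |u-u'|) := by
    have e1 : |x+y| = π/(2*ℓ)*|u+u'| := by
      rw [hxdef, hydef, show π*u/(2*ℓ) + π*u'/(2*ℓ) = π/(2*ℓ)*(u+u') by ring, abs_mul,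
        abs_of_pos (by positivity : (0:ℝ) < π/(2*ℓ))]
    have e2 : |x-y| = π/(2*ℓ)*|u-u'| := by
      rw [hxdef, hydef, show π*u/(2*ℓ) - π*u'/(2*ℓ) = π/(2*ℓ)*(u-u') by ring, abs_mul,
        abs_of_pos (by positivity : (0:ℝ) < π/(2*ℓ))]
    rw [e1, e2]
    field_simp
    ring
  have hM : (0:ℝ) ≤ |u| * |u'| := by positivity
  have hkR : (1:ℝ) ≤ (k:ℝ) := by exact_mod_cast hk
  rcases Nat.even_or_odd k with ⟨a, hk2⟩ | ⟨a, hk2⟩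
  · -- k even, k = a + a, a ≥ 1
    have ha1 : 1 ≤ a := by omega
    have ht0 : ∀ j < 1, F j = 0 := by
      intro j hj; simp only [hFdef]; rw [if_neg (by omega)]
    have key : ∀ i : ℕ, F (i+1) = 4/π^2 * c (2*(i+(a+1))) := by
      intro i
      simp only [hFdef]
      rw [if_pos (show 1 ≤ i+1 ∧ ¬(i+1 = 1 ∧ k = 1) by omega)]
      rw [show 2 * ((i+1:ℕ):ℝ) + (k:ℝ) = ((2*(i+(a+1)):ℕ):ℝ) by push_cast [hk2]; ring]
      simp only [hcdef, hxdef, hydef]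
      have hd : ((i+1:ℕ):ℝ) + (k:ℝ)/2 ≠ 0 := by
        have : (0:ℝ) ≤ (k:ℝ) := Nat.cast_nonneg k
        have h2 : (0:ℝ) ≤ ((i:ℕ):ℝ) := Nat.cast_nonneg i
        push_cast
        intro hcon; linarith
      exact keyAux π u u' ℓ _ _ hπ0 hd (by push_cast [hk2]; ring)
    have hF := shiftSum F (fun m => c (2*m)) _ (a+1) 1 heven ht0 key
    have hid2 : ℓ * (4/π^2*(x*y/2)) = u*u'/(2*ℓ) := by
      rw [hxdef, hydef]; field_simp; ring
    have hval : ℓ * (∑' j, F j) - 1/4*(|u+u'| - |u-u'|)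
        = -(ℓ*(4/π^2*(∑ i ∈ Finset.range (a+1), c (2*i)))) - u*u'/(2*ℓ) := by
      rw [hF.tsum_eq]
      linear_combination hidA - hid2
    rw [show (1:ℝ)/4 * (|u+u'| - |u-u'|) = 1/4*(|u+u'| - |u-u'|) from rfl, hval]
    have habs2 : |u*u'/(2*ℓ)| = |u| * |u'|/(2*ℓ) := by
      rw [abs_div, abs_mul, abs_of_pos (by positivity : (0:ℝ) < 2*ℓ)]
    calc |(-(ℓ*(4/π^2*(∑ i ∈ Finset.range (a+1), c (2*i))))) - u*u'/(2*ℓ)|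
        ≤ |(-(ℓ*(4/π^2*(∑ i ∈ Finset.range (a+1), c (2*i)))))| + |u*u'/(2*ℓ)| := abs_sub _ _
      _ = |ℓ*(4/π^2*(∑ i ∈ Finset.range (a+1), c (2*i)))| + |u| * |u'|/(2*ℓ) := by
          rw [abs_neg, habs2]
      _ ≤ ((a:ℝ)+1)*(|u| * |u'|)/ℓ + |u| * |u'|/(2*ℓ) := by
          have h1 := hPb (a+1) (fun m => c (2*m)) (fun i => cbound _)
          push_cast at h1
          exact add_le_add h1 le_rfl
      _ ≤ 4*(k:ℝ)*|u| * |u'|/ℓ := by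
          have hak : ((a:ℝ)+1) + 1/2 ≤ 4*(k:ℝ) := by
            have ha1' : (1:ℝ) ≤ (a:ℝ) := by exact_mod_cast ha1
            have hkr : (k:ℝ) = (a:ℝ) + (a:ℝ) := by exact_mod_cast congrArg (Nat.cast : ℕ → ℝ) hk2
            rw [hkr]; linarith
          have step : (((a:ℝ)+1) + 1/2)*(|u| * |u'|) ≤ 4*(k:ℝ)*(|u| * |u'|) :=
            mul_le_mul_of_nonneg_right hak hM
          calc ((a:ℝ)+1)*(|u| * |u'|)/ℓ + |u| * |u'|/(2*ℓ)
              = (((a:ℝ)+1) + 1/2)*(|u| * |u'|)/ℓ := by ring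
            _ ≤ 4*(k:ℝ)*(|u| * |u'|)/ℓ := (div_le_div_iff_of_pos_right hℓ).mpr step
            _ = 4*(k:ℝ)*|u| * |u'|/ℓ := by ring
  · -- k odd, k = 2a+1
    obtain ⟨s, t, hts, hsk, hcnd, ht0n⟩ :
        ∃ s t : ℕ, t + a = s ∧ s ≤ 2*k ∧ (∀ i : ℕ, 1 ≤ i+t ∧ ¬(i+t = 1 ∧ k = 1)) ∧
          (∀ j, j < t → ¬(1 ≤ j ∧ ¬(j = 1 ∧ k = 1))) := by
      by_cases hk1 : k = 1
      · exact ⟨2, 2, by omega, by omega, fun i => by omega, fun j hj => by omega⟩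
      · exact ⟨a+1, 1, by omega, by omega, fun i => by omega, fun j hj => by omega⟩
    have hts' : (t:ℝ) + (a:ℝ) = (s:ℝ) := by exact_mod_cast hts
    have ht0 : ∀ j < t, F j = 0 := by
      intro j hj; simp only [hFdef]; rw [if_neg (ht0n j hj)]
    have key : ∀ i : ℕ, F (i+t) = 4/π^2 * c (2*(i+s)+1) := by
      intro i
      simp only [hFdef]
      rw [if_pos (hcnd i)]
      rw [show 2 * ((i+t:ℕ):ℝ) + (k:ℝ) = ((2*(i+s)+1:ℕ):ℝ) by push_cast [hk2]; linarith]
      simp only [hcdef, hxdef, hydef]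
      have hd : ((i+t:ℕ):ℝ) + (k:ℝ)/2 ≠ 0 := by
        have h2 : (0:ℝ) ≤ ((i+t:ℕ):ℝ) := Nat.cast_nonneg _
        intro hcon; linarith
      exact keyAux π u u' ℓ _ _ hπ0 hd (by push_cast [hk2]; linarith)
    have hF := shiftSum F (fun m => c (2*m+1)) _ s t hodd ht0 key
    have hval : ℓ * (∑' j, F j) - 1/4*(|u+u'| - |u-u'|)
        = -(ℓ*(4/π^2*(∑ i ∈ Finset.range s, c (2*i+1)))) := by
      rw [hF.tsum_eq]
      linear_combination hidA
    rw [show (1:ℝ)/4 * (|u+u'| - |u-u'|) = 1/4*(|u+u'| - |u-u'|) from rfl, hval, abs_neg]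
    calc |ℓ*(4/π^2*(∑ i ∈ Finset.range s, c (2*i+1)))|
        ≤ (s:ℝ)*(|u| * |u'|)/ℓ := hPb s (fun m => c (2*m+1)) (fun i => cbound _)
      _ ≤ 4*(k:ℝ)*|u| * |u'|/ℓ := by
          have hsk' : (s:ℝ) ≤ 2*(k:ℝ) := by exact_mod_cast hsk
          have step : (s:ℝ)*(|u| * |u'|) ≤ 4*(k:ℝ)*(|u| * |u'|) :=
            mul_le_mul_of_nonneg_right (by linarith) hM
          calc (s:ℝ)*(|u| * |u'|)/ℓ ≤ 4*(k:ℝ)*(|u| * |u'|)/ℓ := (div_le_div_iff_of_pos_right hℓ).mpr step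
            _ = 4*(k:ℝ)*|u| * |u'|/ℓ := by ring
end

section
/- Let U : ℝ → [0,∞] be measurable and define Z(x) := sup_{v ≥ x} v³·∫_v^∞ U(t) dt (with values in [0,∞]). Then for all a > 0, all ℓ₁, ℓ₂ > 0 and all positive integers i, j: ∫_0^{ℓ₁} ∫_0^{ℓ₂} U(x+y+a) · |φ_i^{ℓ₁}(x)|² · |φ_j^{ℓ₂}(y)|² dx dy ≤ 2·a^{−3}·Z(a) / max(ℓ₁, ℓ₂). -/
open MeasureTheory Real ENNReal

lemma sin_sq_integral (ℓ : ℝ) (h : 0 < ℓ) (k : ℕ) (hk : 1 ≤ k) :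
    ∫ x in (0:ℝ)..ℓ, Real.sin ((k:ℝ) * π * x / ℓ) ^ 2 = ℓ / 2 := by
  have hc : ((k:ℝ) * π / ℓ) ≠ 0 := by
    have : (0:ℝ) < k := by exact_mod_cast hk
    positivity
  have h1 : ∀ x : ℝ, (k:ℝ) * π * x / ℓ = ((k:ℝ) * π / ℓ) * x := by intro x; ring
  simp_rw [h1]
  rw [intervalIntegral.integral_comp_mul_left (fun x => Real.sin x ^ 2) hc]
  rw [integral_sin_sq]
  have h2 : ((k:ℝ) * π / ℓ) * ℓ = (k:ℝ) * π := by field_simp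
  rw [h2]
  rw [Real.sin_nat_mul_pi]
  have : (0:ℝ) < k := by exact_mod_cast hk
  simp only [smul_eq_mul, mul_zero, zero_mul, zero_div, Real.sin_zero, sub_zero, zero_add]
  field_simp

lemma norm_one (ℓ : ℝ) (h : 0 < ℓ) (k : ℕ) (hk : 1 ≤ k) :
    ∫⁻ x in Set.Icc (0:ℝ) ℓ,
      ENNReal.ofReal ((Real.sqrt (2 / ℓ) * Real.sin ((k:ℝ) * π * x / ℓ)) ^ 2) = 1 := by
  have hpt : ∀ x : ℝ, (Real.sqrt (2 / ℓ) * Real.sin ((k:ℝ) * π * x / ℓ)) ^ 2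
      = (2 / ℓ) * Real.sin ((k:ℝ) * π * x / ℓ) ^ 2 := by
    intro x
    rw [mul_pow, Real.sq_sqrt (by positivity)]
  simp_rw [hpt]
  rw [← ofReal_integral_eq_lintegral_ofReal]
  · rw [MeasureTheory.integral_Icc_eq_integral_Ioc,
      ← intervalIntegral.integral_of_le h.le, intervalIntegral.integral_const_mul,
      sin_sq_integral ℓ h k hk]
    rw [show (2:ℝ) / ℓ * (ℓ / 2) = 1 by field_simp]
    exact ENNReal.ofReal_one
  · apply Continuous.integrableOn_Icc
    fun_prop
  · filter_upwards with x
    positivity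

lemma translate_bound (U : ℝ → ℝ≥0∞) (a ℓ c : ℝ) (hc : a ≤ c) :
    ∫⁻ x in Set.Icc (0:ℝ) ℓ, U (x + c) ≤ ∫⁻ t in Set.Ioi a, U t := by
  rw [← lintegral_indicator measurableSet_Icc]
  have hpt : ∀ x : ℝ, (Set.Icc (0:ℝ) ℓ).indicator (fun x => U (x + c)) x
      = (Set.Icc c (c + ℓ)).indicator U (x + c) := by
    intro x
    by_cases hx : x ∈ Set.Icc (0:ℝ) ℓ
    · rw [Set.indicator_of_mem hx, Set.indicator_of_mem]
      obtain ⟨h1, h2⟩ := hx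
      exact ⟨by linarith, by linarith⟩
    · rw [Set.indicator_of_notMem hx, Set.indicator_of_notMem]
      intro ⟨h1, h2⟩
      exact hx ⟨by linarith, by linarith⟩
  simp_rw [hpt]
  rw [lintegral_add_right_eq_self (fun t => (Set.Icc c (c + ℓ)).indicator U t) c]
  rw [lintegral_indicator measurableSet_Icc]
  calc ∫⁻ t in Set.Icc c (c + ℓ), U t ≤ ∫⁻ t in Set.Ici a, U t :=
        lintegral_mono_set (fun t ht => le_trans hc ht.1)
    _ = ∫⁻ t in Set.Ioi a, U t := by
        rw [← setLIntegral_congr (Ioi_ae_eq_Ici (μ := volume) (a := a))]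

lemma key_bound (U : ℝ → ℝ≥0∞) (hU : Measurable U) (a : ℝ) (ha : 0 < a)
    (ℓA ℓB : ℝ) (hA : 0 < ℓA) (hB : 0 < ℓB) (k m : ℕ) (hk : 1 ≤ k) :
    ∫⁻ x in Set.Icc (0:ℝ) ℓA, ∫⁻ y in Set.Icc (0:ℝ) ℓB,
      U (x + y + a) *
        (ENNReal.ofReal ((Real.sqrt (2 / ℓA) * Real.sin ((k:ℝ) * π * x / ℓA)) ^ 2) *
         ENNReal.ofReal ((Real.sqrt (2 / ℓB) * Real.sin ((m:ℝ) * π * y / ℓB)) ^ 2))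
      ≤ ENNReal.ofReal (2 / ℓB) * ∫⁻ t in Set.Ioi a, U t := by
  set I := ∫⁻ t in Set.Ioi a, U t with hI
  have hBbd : ∀ y : ℝ, ENNReal.ofReal ((Real.sqrt (2 / ℓB) * Real.sin ((m:ℝ) * π * y / ℓB)) ^ 2)
      ≤ ENNReal.ofReal (2 / ℓB) := by
    intro y
    apply ENNReal.ofReal_le_ofReal
    rw [mul_pow, Real.sq_sqrt (by positivity)]
    nlinarith [Real.sin_sq_le_one ((m:ℝ) * π * y / ℓB), (by positivity : (0:ℝ) < 2 / ℓB)]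
  calc ∫⁻ x in Set.Icc (0:ℝ) ℓA, ∫⁻ y in Set.Icc (0:ℝ) ℓB,
        U (x + y + a) *
          (ENNReal.ofReal ((Real.sqrt (2 / ℓA) * Real.sin ((k:ℝ) * π * x / ℓA)) ^ 2) *
           ENNReal.ofReal ((Real.sqrt (2 / ℓB) * Real.sin ((m:ℝ) * π * y / ℓB)) ^ 2))
      ≤ ∫⁻ x in Set.Icc (0:ℝ) ℓA,
          ENNReal.ofReal ((Real.sqrt (2 / ℓA) * Real.sin ((k:ℝ) * π * x / ℓA)) ^ 2) *
            (ENNReal.ofReal (2 / ℓB) * I) := by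
        apply lintegral_mono_ae
        filter_upwards [ae_restrict_mem measurableSet_Icc] with x hx
        calc ∫⁻ y in Set.Icc (0:ℝ) ℓB, U (x + y + a) *
              (ENNReal.ofReal ((Real.sqrt (2 / ℓA) * Real.sin ((k:ℝ) * π * x / ℓA)) ^ 2) *
               ENNReal.ofReal ((Real.sqrt (2 / ℓB) * Real.sin ((m:ℝ) * π * y / ℓB)) ^ 2))
            ≤ ∫⁻ y in Set.Icc (0:ℝ) ℓB, U (y + (x + a)) *
              (ENNReal.ofReal ((Real.sqrt (2 / ℓA) * Real.sin ((k:ℝ) * π * x / ℓA)) ^ 2) *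
               ENNReal.ofReal (2 / ℓB)) := by
              apply lintegral_mono
              intro y
              dsimp only
              rw [show x + y + a = y + (x + a) by ring]
              exact mul_le_mul_right (mul_le_mul_right (hBbd y) _) _
          _ = (∫⁻ y in Set.Icc (0:ℝ) ℓB, U (y + (x + a))) *
              (ENNReal.ofReal ((Real.sqrt (2 / ℓA) * Real.sin ((k:ℝ) * π * x / ℓA)) ^ 2) *
               ENNReal.ofReal (2 / ℓB)) :=
              lintegral_mul_const' _ _
                (ENNReal.mul_ne_top ENNReal.ofReal_ne_top ENNReal.ofReal_ne_top)
          _ ≤ I * (ENNReal.ofReal ((Real.sqrt (2 / ℓA) * Real.sin ((k:ℝ) * π * x / ℓA)) ^ 2) *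
               ENNReal.ofReal (2 / ℓB)) :=
              mul_le_mul_left (translate_bound U a ℓB (x + a) (by linarith [hx.1])) _
          _ = ENNReal.ofReal ((Real.sqrt (2 / ℓA) * Real.sin ((k:ℝ) * π * x / ℓA)) ^ 2) *
              (ENNReal.ofReal (2 / ℓB) * I) := by ring
    _ = (∫⁻ x in Set.Icc (0:ℝ) ℓA,
          ENNReal.ofReal ((Real.sqrt (2 / ℓA) * Real.sin ((k:ℝ) * π * x / ℓA)) ^ 2)) *
            (ENNReal.ofReal (2 / ℓB) * I) := lintegral_mul_const _ (by fun_prop)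
    _ = ENNReal.ofReal (2 / ℓB) * I := by rw [norm_one ℓA hA k hk, one_mul]

lemma final_step (Z : ℝ → ℝ≥0∞) (a L : ℝ) (ha : 0 < a) (hL : 0 < L)
    (I : ℝ≥0∞)
    (hZI : ENNReal.ofReal (a ^ 3) * I ≤ Z a) :
    ENNReal.ofReal (2 / L) * I ≤ ENNReal.ofReal (2 / (a ^ 3 * L)) * Z a := by
  calc ENNReal.ofReal (2 / L) * I
      = ENNReal.ofReal (2 / (a ^ 3 * L)) * (ENNReal.ofReal (a ^ 3) * I) := by
        rw [← mul_assoc, ← ENNReal.ofReal_mul (by positivity)]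
        congr 2
        field_simp
    _ ≤ ENNReal.ofReal (2 / (a ^ 3 * L)) * Z a := mul_le_mul_right hZI _

/-- Long-distance bound on the interaction amplitude of two one-particle
Dirichlet eigenstates living in pieces of lengths `ℓ₁`, `ℓ₂` at distance `a`:
`∫∫ U(x+y+a)·|φ_i^{ℓ₁}(x)|²·|φ_j^{ℓ₂}(y)|² ≤ 2·a⁻³·Z(a)/max(ℓ₁,ℓ₂)`. -/
theorem stmt10
    (U : ℝ → ℝ≥0∞) (hUmeas : Measurable U)
    (Z : ℝ → ℝ≥0∞)
    (hZ : ∀ x : ℝ, Z x = ⨆ v ∈ Set.Ici x, ENNReal.ofReal (v ^ 3) * ∫⁻ t in Set.Ioi v, U t)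
    (a ℓ₁ ℓ₂ : ℝ) (ha : 0 < a) (h₁ : 0 < ℓ₁) (h₂ : 0 < ℓ₂)
    (i j : ℕ) (hi : 1 ≤ i) (hj : 1 ≤ j) :
    (∫⁻ x in Set.Icc (0:ℝ) ℓ₁, ∫⁻ y in Set.Icc (0:ℝ) ℓ₂,
        U (x + y + a) *
          ENNReal.ofReal ((Real.sqrt (2 / ℓ₁) * Real.sin ((i:ℝ) * π * x / ℓ₁)) ^ 2 *
            (Real.sqrt (2 / ℓ₂) * Real.sin ((j:ℝ) * π * y / ℓ₂)) ^ 2))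
      ≤ ENNReal.ofReal (2 / (a ^ 3 * max ℓ₁ ℓ₂)) * Z a := by

  have hZI : ENNReal.ofReal (a ^ 3) * (∫⁻ t in Set.Ioi a, U t) ≤ Z a := by
    rw [hZ a]
    exact le_iSup₂ (f := fun v (_ : v ∈ Set.Ici a) =>
      ENNReal.ofReal (v ^ 3) * ∫⁻ t in Set.Ioi v, U t) a Set.self_mem_Ici
  simp_rw [ENNReal.ofReal_mul (sq_nonneg _)]
  rcases le_total ℓ₁ ℓ₂ with hle | hle
  · rw [max_eq_right hle]
    exact le_trans (key_bound U hUmeas a ha ℓ₁ ℓ₂ h₁ h₂ i j hi)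
      (final_step Z a ℓ₂ ha h₂ _ hZI)
  · rw [max_eq_left hle]
    have hswap : (∫⁻ x in Set.Icc (0:ℝ) ℓ₁, ∫⁻ y in Set.Icc (0:ℝ) ℓ₂,
        U (x + y + a) *
          (ENNReal.ofReal ((Real.sqrt (2 / ℓ₁) * Real.sin ((i:ℝ) * π * x / ℓ₁)) ^ 2) *
           ENNReal.ofReal ((Real.sqrt (2 / ℓ₂) * Real.sin ((j:ℝ) * π * y / ℓ₂)) ^ 2)))
      = ∫⁻ y in Set.Icc (0:ℝ) ℓ₂, ∫⁻ x in Set.Icc (0:ℝ) ℓ₁,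
        U (y + x + a) *
          (ENNReal.ofReal ((Real.sqrt (2 / ℓ₂) * Real.sin ((j:ℝ) * π * y / ℓ₂)) ^ 2) *
           ENNReal.ofReal ((Real.sqrt (2 / ℓ₁) * Real.sin ((i:ℝ) * π * x / ℓ₁)) ^ 2)) := by
      rw [lintegral_lintegral_swap]
      · apply lintegral_congr
        intro y
        apply lintegral_congr
        intro x
        rw [show x + y + a = y + x + a by ring]
        ring
      · apply Measurable.aemeasurable
        fun_prop
    rw [hswap]
    exact le_trans (key_bound U hUmeas a ha ℓ₂ ℓ₁ h₂ h₁ j i hj)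
      (final_step Z a ℓ₁ ha h₁ _ hZI)
end

section
/- For every ε ∈ (0,2) there exists a constant C = C(ε) > 0 such that for every measurable U : ℝ → [0,∞], every a > 0, all lengths 0 < ℓ₂ ≤ ℓ₁ and all i, j ∈ {1,2}: ∫_0^{ℓ₁} ∫_0^{ℓ₂} U(x+y+a) · |φ_i^{ℓ₁}(x)|² · |φ_j^{ℓ₂}(y)|² dx dy ≤ C · a^{−ε} · Z(a) · ℓ₁^{−2} · ℓ₂^{−(2−ε)}, where Z(x) := sup_{v ≥ x} v³·∫_v^∞ U(t) dt. -/
open MeasureTheory Real ENNReal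
open Set

-- shift lemma
lemma shift_bound (U : ℝ → ℝ≥0∞) (hU : Measurable U) (b ℓ : ℝ) (hb : 0 < b) :
    ∫⁻ x in Set.Icc (0:ℝ) ℓ, U (x + b) * ENNReal.ofReal (x ^ 2)
      ≤ ∫⁻ t in Set.Ioi b, U t * ENNReal.ofReal (min ℓ t ^ 2) := by
  have h1 : ∫⁻ x in Set.Icc (0:ℝ) ℓ, U (x + b) * ENNReal.ofReal (x ^ 2)
      = ∫⁻ x in Set.Ioc (0:ℝ) ℓ, U (x + b) * ENNReal.ofReal (x ^ 2) :=
    (setLIntegral_congr Ioc_ae_eq_Icc).symm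
  have h2 : (fun x : ℝ => x + b) ⁻¹' Set.Ioc b (b + ℓ) = Set.Ioc 0 ℓ := by
    ext x
    simp only [Set.mem_preimage, Set.mem_Ioc]
    constructor
    · rintro ⟨h, h'⟩; constructor <;> linarith
    · rintro ⟨h, h'⟩; constructor <;> linarith
  have h3 : ∫⁻ x in Set.Ioc (0:ℝ) ℓ, U (x + b) * ENNReal.ofReal (x ^ 2)
      = ∫⁻ t in Set.Ioc b (b + ℓ), U t * ENNReal.ofReal ((t - b) ^ 2) := by
    rw [← h2]
    have := (measurePreserving_add_right volume b).setLIntegral_comp_preimage_emb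
      (MeasurableEquiv.addRight b).measurableEmbedding
      (fun t => U t * ENNReal.ofReal ((t - b) ^ 2)) (Set.Ioc b (b + ℓ))
    simp only [add_sub_cancel_right] at this
    exact this
  rw [h1, h3]
  calc ∫⁻ t in Set.Ioc b (b + ℓ), U t * ENNReal.ofReal ((t - b) ^ 2)
      ≤ ∫⁻ t in Set.Ioc b (b + ℓ), U t * ENNReal.ofReal (min ℓ t ^ 2) := by
        apply setLIntegral_mono' measurableSet_Ioc
        intro t ht
        apply mul_le_mul_right
        apply ENNReal.ofReal_le_ofReal
        apply pow_le_pow_left₀ (by linarith [ht.1])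
        exact le_min (by linarith [ht.2]) (by linarith [ht.1])
    _ ≤ ∫⁻ t in Set.Ioi b, U t * ENNReal.ofReal (min ℓ t ^ 2) :=
        lintegral_mono_set Set.Ioc_subset_Ioi_self

lemma core_bound (U : ℝ → ℝ≥0∞) (hU : Measurable U) (a ℓ₁ ℓ₂ : ℝ)
    (ha : 0 < a) (h2 : 0 < ℓ₂) :
    ∫⁻ x in Set.Icc (0:ℝ) ℓ₁, ∫⁻ y in Set.Icc (0:ℝ) ℓ₂,
        U (x + y + a) * ENNReal.ofReal (x ^ 2 * y ^ 2)
      ≤ ∫⁻ t in Set.Ioi a, U t * ENNReal.ofReal (min ℓ₁ t ^ 2 * min ℓ₂ t ^ 3) := by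
  -- swap the two integrals
  have hmeas : Measurable (fun p : ℝ × ℝ => U (p.1 + p.2 + a) * ENNReal.ofReal (p.1 ^ 2 * p.2 ^ 2)) := by
    exact (hU.comp (((measurable_fst.add measurable_snd).add_const a))).mul
      (((measurable_fst.pow_const 2).mul (measurable_snd.pow_const 2)).ennreal_ofReal)
  have hswap1 : ∫⁻ x in Set.Icc (0:ℝ) ℓ₁, ∫⁻ y in Set.Icc (0:ℝ) ℓ₂,
        U (x + y + a) * ENNReal.ofReal (x ^ 2 * y ^ 2)
      = ∫⁻ y in Set.Icc (0:ℝ) ℓ₂, ∫⁻ x in Set.Icc (0:ℝ) ℓ₁,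
        U (x + y + a) * ENNReal.ofReal (x ^ 2 * y ^ 2) :=
    lintegral_lintegral_swap hmeas.aemeasurable
  rw [hswap1]
  set F : ℝ × ℝ → ℝ≥0∞ := fun p =>
    Set.indicator {q : ℝ × ℝ | q.1 + a < q.2}
      (fun q => ENNReal.ofReal (q.1 ^ 2) * (U q.2 * ENNReal.ofReal (min ℓ₁ q.2 ^ 2))) p with hF
  have hFmeas : Measurable F := by
    apply Measurable.indicator
    · exact ((measurable_fst.pow_const 2).ennreal_ofReal).mul
        ((hU.comp measurable_snd).mul (((measurable_const.min measurable_snd).pow_const 2).ennreal_ofReal))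
    · exact measurableSet_lt (measurable_fst.add_const a) measurable_snd
  have step1 : ∫⁻ y in Set.Icc (0:ℝ) ℓ₂, ∫⁻ x in Set.Icc (0:ℝ) ℓ₁,
        U (x + y + a) * ENNReal.ofReal (x ^ 2 * y ^ 2)
      ≤ ∫⁻ y in Set.Icc (0:ℝ) ℓ₂, ∫⁻ t in Set.Ioi a, F (y, t) := by
    apply setLIntegral_mono' measurableSet_Icc
    intro y hy
    have hb : 0 < y + a := by linarith [hy.1]
    calc ∫⁻ x in Set.Icc (0:ℝ) ℓ₁, U (x + y + a) * ENNReal.ofReal (x ^ 2 * y ^ 2)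
        = ∫⁻ x in Set.Icc (0:ℝ) ℓ₁,
            ENNReal.ofReal (y ^ 2) * (U (x + (y + a)) * ENNReal.ofReal (x ^ 2)) := by
          apply lintegral_congr
          intro x
          rw [ENNReal.ofReal_mul (sq_nonneg x), show x + y + a = x + (y + a) by ring]
          ring
      _ = ENNReal.ofReal (y ^ 2) * ∫⁻ x in Set.Icc (0:ℝ) ℓ₁,
            U (x + (y + a)) * ENNReal.ofReal (x ^ 2) :=
          lintegral_const_mul' _ _ ENNReal.ofReal_ne_top
      _ ≤ ENNReal.ofReal (y ^ 2) * ∫⁻ t in Set.Ioi (y + a), U t * ENNReal.ofReal (min ℓ₁ t ^ 2) :=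
          mul_le_mul_right (shift_bound U hU (y + a) ℓ₁ hb) _
      _ = ∫⁻ t in Set.Ioi (y + a),
            ENNReal.ofReal (y ^ 2) * (U t * ENNReal.ofReal (min ℓ₁ t ^ 2)) :=
          (lintegral_const_mul' _ _ ENNReal.ofReal_ne_top).symm
      _ = ∫⁻ t in Set.Ioi a, F (y, t) := by
          have : ∀ t : ℝ, F (y, t) = (Set.Ioi (y + a)).indicator
              (fun t => ENNReal.ofReal (y ^ 2) * (U t * ENNReal.ofReal (min ℓ₁ t ^ 2))) t := by
            intro t
            simp only [hF, Set.indicator_apply, Set.mem_setOf_eq, Set.mem_Ioi]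
          simp only [this]
          rw [setLIntegral_indicator measurableSet_Ioi]
          congr 1
          rw [Set.Ioi_inter_Ioi, max_eq_left (by linarith [hy.1] : a ≤ y + a)]
  refine step1.trans ?_
  have hswap2 : ∫⁻ y in Set.Icc (0:ℝ) ℓ₂, ∫⁻ t in Set.Ioi a, F (y, t)
      = ∫⁻ t in Set.Ioi a, ∫⁻ y in Set.Icc (0:ℝ) ℓ₂, F (y, t) :=
    lintegral_lintegral_swap hFmeas.aemeasurable
  rw [hswap2]
  apply setLIntegral_mono' measurableSet_Ioi
  intro t ht
  have ht0 : 0 < t := lt_trans ha ht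
  have hmt : 0 < min ℓ₂ t := lt_min h2 ht0
  calc ∫⁻ y in Set.Icc (0:ℝ) ℓ₂, F (y, t)
      = ∫⁻ y in Set.Iio (t - a) ∩ Set.Icc (0:ℝ) ℓ₂,
          ENNReal.ofReal (y ^ 2) * (U t * ENNReal.ofReal (min ℓ₁ t ^ 2)) := by
        have : ∀ y : ℝ, F (y, t) = (Set.Iio (t - a)).indicator
            (fun y => ENNReal.ofReal (y ^ 2) * (U t * ENNReal.ofReal (min ℓ₁ t ^ 2))) y := by
          intro y
          simp only [hF, Set.indicator_apply, Set.mem_setOf_eq, Set.mem_Iio, lt_sub_iff_add_lt]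
        simp only [this]
        rw [setLIntegral_indicator measurableSet_Iio]
    _ ≤ ∫⁻ y in Set.Icc (0:ℝ) (min ℓ₂ t),
          ENNReal.ofReal (y ^ 2) * (U t * ENNReal.ofReal (min ℓ₁ t ^ 2)) := by
        apply lintegral_mono_set
        rintro y ⟨hy1, hy2⟩
        exact ⟨hy2.1, le_min hy2.2 (by simp only [Set.mem_Iio] at hy1; linarith)⟩
    _ ≤ ∫⁻ y in Set.Icc (0:ℝ) (min ℓ₂ t),
          ENNReal.ofReal (min ℓ₂ t ^ 2) * (U t * ENNReal.ofReal (min ℓ₁ t ^ 2)) := by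
        apply setLIntegral_mono' measurableSet_Icc
        intro y hy
        exact mul_le_mul_left (ENNReal.ofReal_le_ofReal
          (pow_le_pow_left₀ hy.1 hy.2 2)) _
    _ = ENNReal.ofReal (min ℓ₂ t ^ 2) * (U t * ENNReal.ofReal (min ℓ₁ t ^ 2))
          * ENNReal.ofReal (min ℓ₂ t) := by
        rw [setLIntegral_const, Real.volume_Icc, sub_zero]
    _ = U t * ENNReal.ofReal (min ℓ₁ t ^ 2 * min ℓ₂ t ^ 3) := by
        rw [show (min ℓ₂ t) ^ 3 = min ℓ₂ t ^ 2 * min ℓ₂ t by ring]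
        rw [ENNReal.ofReal_mul (by positivity), ENNReal.ofReal_mul (by positivity)]
        ring


lemma dyadic_cover (a : ℝ) (ha : 0 < a) :
    Set.Ioi a ⊆ ⋃ k : ℕ, Set.Ioc ((2:ℝ) ^ k * a) ((2:ℝ) ^ (k + 1) * a) := by
  intro t ht
  simp only [Set.mem_Ioi] at ht
  have hex : ∃ n : ℕ, t ≤ 2 ^ (n + 1) * a := by
    obtain ⟨n, hn⟩ := pow_unbounded_of_one_lt (t / a) (by norm_num : (1:ℝ) < 2)
    rw [div_lt_iff₀ ha] at hn
    have h2 : (2:ℝ) ^ n * a ≤ 2 ^ (n + 1) * a :=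
      mul_le_mul_of_nonneg_right (pow_le_pow_right₀ (by norm_num) (Nat.le_succ n)) ha.le
    exact ⟨n, by linarith⟩
  classical
  let k := Nat.find hex
  refine Set.mem_iUnion.2 ⟨k, ?_, Nat.find_spec hex⟩
  rcases Nat.eq_zero_or_pos k with hk | hk
  · simpa [hk] using (by simpa using ht : 2 ^ (0:ℕ) * a < t)
  · obtain ⟨m, hm⟩ := Nat.exists_eq_succ_of_ne_zero hk.ne'
    have := Nat.find_min hex (m := m) (by omega)
    push_neg at this
    simpa [hm] using this

lemma dyadic_bound (U : ℝ → ℝ≥0∞) (ε a : ℝ) (hε₀ : 0 < ε) (hε₂ : ε < 2) (ha : 0 < a)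
    (Za : ℝ≥0∞) (hZ : ∀ v : ℝ, a ≤ v → ENNReal.ofReal (v ^ 3) * ∫⁻ t in Set.Ioi v, U t ≤ Za) :
    ∫⁻ t in Set.Ioi a, U t * ENNReal.ofReal (t ^ (3 - ε))
      ≤ ENNReal.ofReal (2 ^ (3 - ε) * (1 - 2 ^ (-ε))⁻¹ * a ^ (-ε)) * Za := by
  have hr1 : (2:ℝ) ^ (-ε) < 1 :=
    Real.rpow_lt_one_of_one_lt_of_neg (by norm_num) (by linarith)
  have hr0 : (0:ℝ) < 2 ^ (-ε) := Real.rpow_pos_of_pos (by norm_num) _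
  have h2p : (0:ℝ) < 2 := by norm_num
  -- bound on each dyadic piece
  have piece : ∀ k : ℕ,
      ∫⁻ t in Set.Ioc ((2:ℝ) ^ k * a) ((2:ℝ) ^ (k + 1) * a), U t * ENNReal.ofReal (t ^ (3 - ε))
        ≤ (ENNReal.ofReal (2 ^ (3 - ε) * a ^ (-ε)) * ENNReal.ofReal (2 ^ (-ε)) ^ k) * Za := by
    intro k
    have hvk : (0:ℝ) < 2 ^ k * a := by positivity
    have havk : a ≤ 2 ^ k * a := le_mul_of_one_le_left ha.le (one_le_pow₀ (by norm_num))
    have hreal : ((2:ℝ) ^ (k + 1) * a) ^ (3 - ε)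
        = (2 ^ (3 - ε) * a ^ (-ε) * ((2:ℝ) ^ (-ε)) ^ k) * ((2:ℝ) ^ k * a) ^ 3 := by
      have e1 : ((2:ℝ) ^ (k + 1) * a) ^ (3 - ε)
          = (2:ℝ) ^ (((k:ℝ) + 1) * (3 - ε)) * a ^ ((3:ℝ) - ε) := by
        rw [Real.mul_rpow (by positivity) ha.le, ← Real.rpow_natCast 2 (k + 1),
          ← Real.rpow_mul (by norm_num)]
        push_cast
        ring_nf
      have e2 : ((2:ℝ) ^ k * a) ^ 3 = (2:ℝ) ^ ((k:ℝ) * 3) * a ^ (3:ℝ) := by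
        rw [mul_pow, ← Real.rpow_natCast ((2:ℝ) ^ k) 3, ← Real.rpow_natCast 2 k,
          ← Real.rpow_mul (by norm_num), ← Real.rpow_natCast a 3]
        norm_num
      have e3 : ((2:ℝ) ^ (-ε)) ^ k = (2:ℝ) ^ (-(ε * (k:ℝ))) := by
        rw [← Real.rpow_natCast ((2:ℝ) ^ (-ε)) k, ← Real.rpow_mul (by norm_num)]
        ring_nf
      rw [e1, e2, e3]
      rw [show (2:ℝ) ^ ((3:ℝ) - ε) * a ^ (-ε) * (2:ℝ) ^ (-(ε * (k:ℝ)))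
            * ((2:ℝ) ^ ((k:ℝ) * 3) * a ^ (3:ℝ))
          = ((2:ℝ) ^ ((3:ℝ) - ε) * (2:ℝ) ^ (-(ε * (k:ℝ))) * (2:ℝ) ^ ((k:ℝ) * 3))
            * (a ^ (-ε) * a ^ (3:ℝ)) by ring]
      rw [← Real.rpow_add h2p, ← Real.rpow_add h2p, ← Real.rpow_add ha]
      congr 1 <;> [skip; congr 1] <;> ring_nf
    calc ∫⁻ t in Set.Ioc ((2:ℝ) ^ k * a) ((2:ℝ) ^ (k + 1) * a), U t * ENNReal.ofReal (t ^ (3 - ε))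
        ≤ ∫⁻ t in Set.Ioc ((2:ℝ) ^ k * a) ((2:ℝ) ^ (k + 1) * a),
            U t * ENNReal.ofReal (((2:ℝ) ^ (k + 1) * a) ^ (3 - ε)) := by
          apply setLIntegral_mono' measurableSet_Ioc
          intro t ht
          exact mul_le_mul_right (ENNReal.ofReal_le_ofReal
            (Real.rpow_le_rpow (le_of_lt (lt_trans hvk ht.1)) ht.2 (by linarith))) _
      _ ≤ ∫⁻ t in Set.Ioi ((2:ℝ) ^ k * a), U t * ENNReal.ofReal (((2:ℝ) ^ (k + 1) * a) ^ (3 - ε)) :=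
          lintegral_mono_set Set.Ioc_subset_Ioi_self
      _ = ENNReal.ofReal (((2:ℝ) ^ (k + 1) * a) ^ (3 - ε)) * ∫⁻ t in Set.Ioi ((2:ℝ) ^ k * a), U t := by
          rw [lintegral_mul_const' _ _ ENNReal.ofReal_ne_top]; ring
      _ ≤ ENNReal.ofReal (((2:ℝ) ^ (k + 1) * a) ^ (3 - ε)) *
            ((ENNReal.ofReal (((2:ℝ) ^ k * a) ^ 3))⁻¹ * Za) := by
          apply mul_le_mul_right
          have hne0 : ENNReal.ofReal (((2:ℝ) ^ k * a) ^ 3) ≠ 0 := by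
            simp only [ne_eq, ENNReal.ofReal_eq_zero, not_le]
            positivity
          have key := hZ ((2:ℝ) ^ k * a) havk
          calc ∫⁻ t in Set.Ioi ((2:ℝ) ^ k * a), U t
              = (ENNReal.ofReal (((2:ℝ) ^ k * a) ^ 3))⁻¹ *
                  (ENNReal.ofReal (((2:ℝ) ^ k * a) ^ 3) * ∫⁻ t in Set.Ioi ((2:ℝ) ^ k * a), U t) := by
                rw [← mul_assoc, ENNReal.inv_mul_cancel hne0 ENNReal.ofReal_ne_top, one_mul]
            _ ≤ (ENNReal.ofReal (((2:ℝ) ^ k * a) ^ 3))⁻¹ * Za := mul_le_mul_right key _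
      _ = (ENNReal.ofReal (2 ^ (3 - ε) * a ^ (-ε)) * ENNReal.ofReal (2 ^ (-ε)) ^ k) * Za := by
          rw [← mul_assoc]
          congr 1
          rw [hreal, ENNReal.ofReal_mul (by positivity), mul_assoc,
            ENNReal.mul_inv_cancel (by simp only [ne_eq, ENNReal.ofReal_eq_zero, not_le]; positivity)
              ENNReal.ofReal_ne_top, mul_one,
            ENNReal.ofReal_mul (by positivity), ENNReal.ofReal_pow hr0.le]
  calc ∫⁻ t in Set.Ioi a, U t * ENNReal.ofReal (t ^ (3 - ε))
      ≤ ∫⁻ t in ⋃ k : ℕ, Set.Ioc ((2:ℝ) ^ k * a) ((2:ℝ) ^ (k + 1) * a),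
          U t * ENNReal.ofReal (t ^ (3 - ε)) :=
        lintegral_mono_set (dyadic_cover a ha)
    _ ≤ ∑' k : ℕ, ∫⁻ t in Set.Ioc ((2:ℝ) ^ k * a) ((2:ℝ) ^ (k + 1) * a),
          U t * ENNReal.ofReal (t ^ (3 - ε)) := lintegral_iUnion_le _ _
    _ ≤ ∑' k : ℕ, (ENNReal.ofReal (2 ^ (3 - ε) * a ^ (-ε)) * ENNReal.ofReal (2 ^ (-ε)) ^ k) * Za :=
        ENNReal.tsum_le_tsum piece
    _ = ENNReal.ofReal (2 ^ (3 - ε) * a ^ (-ε)) * (∑' k : ℕ, ENNReal.ofReal (2 ^ (-ε)) ^ k) * Za := by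
        rw [ENNReal.tsum_mul_right, ENNReal.tsum_mul_left]
    _ = ENNReal.ofReal (2 ^ (3 - ε) * (1 - 2 ^ (-ε))⁻¹ * a ^ (-ε)) * Za := by
        congr 1
        rw [ENNReal.tsum_geometric]
        have h1r : (1 : ℝ≥0∞) - ENNReal.ofReal (2 ^ (-ε)) = ENNReal.ofReal (1 - 2 ^ (-ε)) := by
          rw [← ENNReal.ofReal_one, ← ENNReal.ofReal_sub _ hr0.le]
        rw [h1r, ← ENNReal.ofReal_inv_of_pos (by linarith), ← ENNReal.ofReal_mul (by positivity)]
        congr 1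
        ring

lemma sin_sq_bound (ℓ x : ℝ) (hℓ : 0 < ℓ) (i : ℕ) (hi : i ≤ 2) :
    (Real.sqrt (2 / ℓ) * Real.sin ((i:ℝ) * π * x / ℓ)) ^ 2 ≤ 8 * π ^ 2 * x ^ 2 / ℓ ^ 3 := by
  have h1 : (Real.sqrt (2 / ℓ)) ^ 2 = 2 / ℓ := Real.sq_sqrt (by positivity)
  have h2 : Real.sin ((i:ℝ) * π * x / ℓ) ^ 2 ≤ ((i:ℝ) * π * x / ℓ) ^ 2 := Real.sin_sq_le_sq
  have hi4 : ((i:ℝ)) ^ 2 ≤ 4 := by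
    have : ((i:ℝ)) ≤ 2 := by exact_mod_cast hi
    nlinarith [Nat.cast_nonneg (α := ℝ) i]
  have h3 : ((i:ℝ) * π * x / ℓ) ^ 2 = (i:ℝ) ^ 2 * (π ^ 2 * x ^ 2 / ℓ ^ 2) := by
    field_simp
  calc (Real.sqrt (2 / ℓ) * Real.sin ((i:ℝ) * π * x / ℓ)) ^ 2
      = (2 / ℓ) * Real.sin ((i:ℝ) * π * x / ℓ) ^ 2 := by rw [mul_pow, h1]
    _ ≤ (2 / ℓ) * ((i:ℝ) ^ 2 * (π ^ 2 * x ^ 2 / ℓ ^ 2)) := by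
        rw [← h3]; exact mul_le_mul_of_nonneg_left h2 (by positivity)
    _ ≤ (2 / ℓ) * (4 * (π ^ 2 * x ^ 2 / ℓ ^ 2)) := by
        apply mul_le_mul_of_nonneg_left _ (by positivity)
        exact mul_le_mul_of_nonneg_right hi4 (by positivity)
    _ = 8 * π ^ 2 * x ^ 2 / ℓ ^ 3 := by field_simp; ring

lemma min_pow_bound (ε ℓ₁ ℓ₂ t : ℝ) (hε₀ : 0 < ε) (hε₂ : ε < 2) (h2 : 0 < ℓ₂)
    (hle : ℓ₂ ≤ ℓ₁) (ht : 0 < t) :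
    min ℓ₁ t ^ 2 * min ℓ₂ t ^ 3 ≤ ℓ₁ * ℓ₂ ^ (1 + ε) * t ^ (3 - ε) := by
  have h1 : 0 < ℓ₁ := lt_of_lt_of_le h2 hle
  have hm1 : (0:ℝ) ≤ min ℓ₁ t := le_min h1.le ht.le
  have hm2 : (0:ℝ) < min ℓ₂ t := lt_min h2 ht
  have b1 : min ℓ₁ t ^ 2 ≤ ℓ₁ * t := by
    rw [sq]
    exact mul_le_mul (min_le_left _ _) (min_le_right _ _) hm1 h1.le
  have b2 : min ℓ₂ t ^ 3 ≤ ℓ₂ ^ (1 + ε) * t ^ (2 - ε) := by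
    have e : min ℓ₂ t ^ 3 = min ℓ₂ t ^ ((1:ℝ) + ε) * min ℓ₂ t ^ ((2:ℝ) - ε) := by
      rw [← Real.rpow_add hm2, show (1:ℝ) + ε + (2 - ε) = ((3:ℕ):ℝ) by push_cast; ring,
        Real.rpow_natCast]
    rw [e]
    exact mul_le_mul (Real.rpow_le_rpow hm2.le (min_le_left _ _) (by linarith))
      (Real.rpow_le_rpow hm2.le (min_le_right _ _) (by linarith))
      (Real.rpow_nonneg hm2.le _) (Real.rpow_nonneg h2.le _)
  calc min ℓ₁ t ^ 2 * min ℓ₂ t ^ 3 ≤ (ℓ₁ * t) * (ℓ₂ ^ (1 + ε) * t ^ (2 - ε)) :=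
        mul_le_mul b1 b2 (by positivity) (by positivity)
    _ = ℓ₁ * ℓ₂ ^ (1 + ε) * (t ^ (1:ℝ) * t ^ ((2:ℝ) - ε)) := by rw [Real.rpow_one]; ring
    _ = ℓ₁ * ℓ₂ ^ (1 + ε) * t ^ (3 - ε) := by
        rw [← Real.rpow_add ht, show (1:ℝ) + (2 - ε) = 3 - ε by ring]

/-- Short-distance bound on the interaction amplitude of two low-lying
one-particle Dirichlet eigenstates (`i, j ∈ {1,2}`) in pieces of lengths `ℓ₂ ≤ ℓ₁` at
distance `a`: it is `≤ C·a^{−ε}·Z(a)·ℓ₁^{−2}·ℓ₂^{−(2−ε)}`. -/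
theorem stmt11 (ε : ℝ) (hε₀ : 0 < ε) (hε₂ : ε < 2) :
    ∃ C : ℝ, 0 < C ∧
      ∀ U : ℝ → ℝ≥0∞, Measurable U →
      ∀ Z : ℝ → ℝ≥0∞,
        (∀ x : ℝ, Z x = ⨆ v ∈ Set.Ici x, ENNReal.ofReal (v ^ 3) * ∫⁻ t in Set.Ioi v, U t) →
      ∀ a : ℝ, 0 < a → ∀ ℓ₁ ℓ₂ : ℝ, 0 < ℓ₂ → ℓ₂ ≤ ℓ₁ →
      ∀ i j : ℕ, (i = 1 ∨ i = 2) → (j = 1 ∨ j = 2) →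
        (∫⁻ x in Set.Icc (0:ℝ) ℓ₁, ∫⁻ y in Set.Icc (0:ℝ) ℓ₂,
            U (x + y + a) *
              ENNReal.ofReal ((Real.sqrt (2 / ℓ₁) * Real.sin ((i:ℝ) * π * x / ℓ₁)) ^ 2 *
                (Real.sqrt (2 / ℓ₂) * Real.sin ((j:ℝ) * π * y / ℓ₂)) ^ 2))
          ≤ ENNReal.ofReal (C * a ^ (-ε) / (ℓ₁ ^ 2 * ℓ₂ ^ (2 - ε))) * Z a := by
  have hr1 : (2:ℝ) ^ (-ε) < 1 :=
    Real.rpow_lt_one_of_one_lt_of_neg (by norm_num) (by linarith)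
  have hD : (0:ℝ) < 2 ^ (3 - ε) * (1 - 2 ^ (-ε))⁻¹ := by
    have := Real.rpow_pos_of_pos (show (0:ℝ) < 2 by norm_num) (3 - ε)
    have h1 : (0:ℝ) < 1 - 2 ^ (-ε) := by linarith
    positivity
  refine ⟨64 * π ^ 4 * (2 ^ (3 - ε) * (1 - 2 ^ (-ε))⁻¹), by positivity, ?_⟩
  intro U hU Z hZ a ha ℓ₁ ℓ₂ h2 hle i j hi hj
  have h1 : 0 < ℓ₁ := lt_of_lt_of_le h2 hle
  have hi2 : i ≤ 2 := by rcases hi with h | h <;> omega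
  have hj2 : j ≤ 2 := by rcases hj with h | h <;> omega
  have hZa : ∀ v : ℝ, a ≤ v → ENNReal.ofReal (v ^ 3) * ∫⁻ t in Set.Ioi v, U t ≤ Z a := by
    intro v hv
    rw [hZ a]
    exact le_biSup (fun v => ENNReal.ofReal (v ^ 3) * ∫⁻ t in Set.Ioi v, U t)
      (Set.mem_Ici.2 hv)
  set K : ℝ := 64 * π ^ 4 / (ℓ₁ ^ 3 * ℓ₂ ^ 3) with hK
  have hKpos : 0 < K := by positivity
  -- Step 1: replace eigenfunctions by quadratic bounds
  have step1 : (∫⁻ x in Set.Icc (0:ℝ) ℓ₁, ∫⁻ y in Set.Icc (0:ℝ) ℓ₂,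
        U (x + y + a) *
          ENNReal.ofReal ((Real.sqrt (2 / ℓ₁) * Real.sin ((i:ℝ) * π * x / ℓ₁)) ^ 2 *
            (Real.sqrt (2 / ℓ₂) * Real.sin ((j:ℝ) * π * y / ℓ₂)) ^ 2))
      ≤ ENNReal.ofReal K * ∫⁻ x in Set.Icc (0:ℝ) ℓ₁, ∫⁻ y in Set.Icc (0:ℝ) ℓ₂,
          U (x + y + a) * ENNReal.ofReal (x ^ 2 * y ^ 2) := by
    rw [← lintegral_const_mul' _ _ ENNReal.ofReal_ne_top]
    apply setLIntegral_mono' measurableSet_Icc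
    intro x hx
    rw [← lintegral_const_mul' _ _ ENNReal.ofReal_ne_top]
    apply setLIntegral_mono' measurableSet_Icc
    intro y hy
    rw [show ENNReal.ofReal K * (U (x + y + a) * ENNReal.ofReal (x ^ 2 * y ^ 2))
      = U (x + y + a) * (ENNReal.ofReal K * ENNReal.ofReal (x ^ 2 * y ^ 2)) by ring]
    apply mul_le_mul_right
    rw [← ENNReal.ofReal_mul hKpos.le]
    apply ENNReal.ofReal_le_ofReal
    calc (Real.sqrt (2 / ℓ₁) * Real.sin ((i:ℝ) * π * x / ℓ₁)) ^ 2 *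
          (Real.sqrt (2 / ℓ₂) * Real.sin ((j:ℝ) * π * y / ℓ₂)) ^ 2
        ≤ (8 * π ^ 2 * x ^ 2 / ℓ₁ ^ 3) * (8 * π ^ 2 * y ^ 2 / ℓ₂ ^ 3) :=
          mul_le_mul (sin_sq_bound ℓ₁ x h1 i hi2) (sin_sq_bound ℓ₂ y h2 j hj2)
            (sq_nonneg _) (by positivity)
      _ = K * (x ^ 2 * y ^ 2) := by rw [hK]; ring
  refine step1.trans ?_
  -- Step 2: core bound + min bound + dyadic bound
  have step2 : (∫⁻ x in Set.Icc (0:ℝ) ℓ₁, ∫⁻ y in Set.Icc (0:ℝ) ℓ₂,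
        U (x + y + a) * ENNReal.ofReal (x ^ 2 * y ^ 2))
      ≤ ENNReal.ofReal (ℓ₁ * ℓ₂ ^ (1 + ε)) *
          ∫⁻ t in Set.Ioi a, U t * ENNReal.ofReal (t ^ (3 - ε)) := by
    refine (core_bound U hU a ℓ₁ ℓ₂ ha h2).trans ?_
    rw [← lintegral_const_mul' _ _ ENNReal.ofReal_ne_top]
    apply setLIntegral_mono' measurableSet_Ioi
    intro t ht
    rw [show ENNReal.ofReal (ℓ₁ * ℓ₂ ^ (1 + ε)) * (U t * ENNReal.ofReal (t ^ (3 - ε)))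
      = U t * (ENNReal.ofReal (ℓ₁ * ℓ₂ ^ (1 + ε)) * ENNReal.ofReal (t ^ (3 - ε))) by ring]
    apply mul_le_mul_right
    rw [← ENNReal.ofReal_mul (by positivity)]
    exact ENNReal.ofReal_le_ofReal
      (min_pow_bound ε ℓ₁ ℓ₂ t hε₀ hε₂ h2 hle (lt_trans ha ht))
  have step3 := dyadic_bound U ε a hε₀ hε₂ ha (Z a) hZa
  calc ENNReal.ofReal K * ∫⁻ x in Set.Icc (0:ℝ) ℓ₁, ∫⁻ y in Set.Icc (0:ℝ) ℓ₂,
        U (x + y + a) * ENNReal.ofReal (x ^ 2 * y ^ 2)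
      ≤ ENNReal.ofReal K * (ENNReal.ofReal (ℓ₁ * ℓ₂ ^ (1 + ε)) *
          ∫⁻ t in Set.Ioi a, U t * ENNReal.ofReal (t ^ (3 - ε))) :=
        mul_le_mul_right step2 _
    _ ≤ ENNReal.ofReal K * (ENNReal.ofReal (ℓ₁ * ℓ₂ ^ (1 + ε)) *
          (ENNReal.ofReal (2 ^ (3 - ε) * (1 - 2 ^ (-ε))⁻¹ * a ^ (-ε)) * Z a)) :=
        mul_le_mul_right (mul_le_mul_right step3 _) _
    _ = ENNReal.ofReal (K * (ℓ₁ * ℓ₂ ^ (1 + ε)) * (2 ^ (3 - ε) * (1 - 2 ^ (-ε))⁻¹ * a ^ (-ε)))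
          * Z a := by
        rw [ENNReal.ofReal_mul (mul_nonneg hKpos.le (by positivity)),
          ENNReal.ofReal_mul hKpos.le]
        ring
    _ = ENNReal.ofReal (64 * π ^ 4 * (2 ^ (3 - ε) * (1 - 2 ^ (-ε))⁻¹) * a ^ (-ε) /
          (ℓ₁ ^ 2 * ℓ₂ ^ (2 - ε))) * Z a := by
        congr 2
        have hl2 : ℓ₂ ^ ((1:ℝ) + ε) * ℓ₂ ^ ((2:ℝ) - ε) = ℓ₂ ^ 3 := by
          rw [← Real.rpow_add h2, show (1:ℝ) + ε + (2 - ε) = ((3:ℕ):ℝ) by push_cast; ring,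
            Real.rpow_natCast]
        have hp1 : (0:ℝ) < ℓ₂ ^ ((1:ℝ) + ε) := Real.rpow_pos_of_pos h2 _
        have hp2 : (0:ℝ) < ℓ₂ ^ ((2:ℝ) - ε) := Real.rpow_pos_of_pos h2 _
        rw [hK, show ℓ₂ ^ ((1:ℝ) + ε) = ℓ₂ ^ 3 / ℓ₂ ^ ((2:ℝ) - ε) from by
          rw [eq_div_iff (Real.rpow_pos_of_pos h2 ((2:ℝ) - ε)).ne']; exact hl2]
        have h2ne : ℓ₂ ≠ 0 := h2.ne'
        have h1ne : ℓ₁ ≠ 0 := h1.ne'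
        have hp2ne : ℓ₂ ^ ((2:ℝ) - ε) ≠ 0 := (Real.rpow_pos_of_pos h2 _).ne'
        have hsubne : (1:ℝ) - 2 ^ (-ε) ≠ 0 := by linarith
        field_simp
end

section
/- Let U : ℝ → [0,∞) be measurable, integrable and compactly supported. Then there exists a constant C = C(U) > 0 such that for all ℓ₁, ℓ₂ > 0, every a ≥ 0 and all positive integers i, j: (1/(ℓ₁·ℓ₂)) · ∫_0^{ℓ₁} ∫_0^{ℓ₂} U(x+y+a) · sin²(iπx/ℓ₁) · sin²(jπy/ℓ₂) dx dy ≤ C · min(i,ℓ₁)² · min(j,ℓ₂)² / (ℓ₁³·ℓ₂³). -/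
open MeasureTheory Real

set_option maxHeartbeats 1000000 in
/-- For an integrable, compactly supported nonnegative potential `U`,
the interaction amplitude of the `i`-th and `j`-th Dirichlet levels of two pieces at
distance `a` is bounded by `C·min(i,ℓ₁)²·min(j,ℓ₂)²/(ℓ₁³ℓ₂³)`. -/
theorem stmt12
    (U : ℝ → ℝ) (hUmeas : Measurable U) (hUnonneg : ∀ x, 0 ≤ U x)
    (hUint : Integrable U) (hUsupp : HasCompactSupport U) :
    ∃ C : ℝ, 0 < C ∧
      ∀ ℓ₁ ℓ₂ : ℝ, 0 < ℓ₁ → 0 < ℓ₂ → ∀ a : ℝ, 0 ≤ a →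
      ∀ i j : ℕ, 1 ≤ i → 1 ≤ j →
        (1 / (ℓ₁ * ℓ₂)) * ∫ x in Set.Icc (0:ℝ) ℓ₁, ∫ y in Set.Icc (0:ℝ) ℓ₂,
            U (x + y + a) * Real.sin ((i:ℝ) * π * x / ℓ₁) ^ 2
              * Real.sin ((j:ℝ) * π * y / ℓ₂) ^ 2
          ≤ C * min (i:ℝ) ℓ₁ ^ 2 * min (j:ℝ) ℓ₂ ^ 2 / (ℓ₁ ^ 3 * ℓ₂ ^ 3) := by
  -- radius of the support
  obtain ⟨R₀, hR₀⟩ := hUsupp.isBounded.subset_closedBall 0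
  set R : ℝ := max R₀ 1 with hRdef
  have hR1 : (1:ℝ) ≤ R := le_max_right _ _
  have hR0 : (0:ℝ) < R := lt_of_lt_of_le one_pos hR1
  have hsupp : ∀ t : ℝ, U t ≠ 0 → t ≤ R := by
    intro t ht
    have : t ∈ tsupport U := subset_tsupport U ht
    have := hR₀ this
    rw [Metric.mem_closedBall, Real.dist_eq, sub_zero] at this
    have := (abs_le.mp this).2
    exact this.trans (le_max_left _ _)
  set IU : ℝ := ∫ x, U x with hIUdef
  have hIU0 : 0 ≤ IU := integral_nonneg hUnonneg
  set C₀ : ℝ := max 1 (π ^ 2 * R ^ 2) with hC₀def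
  have hC₀1 : (1:ℝ) ≤ C₀ := le_max_left _ _
  have hC₀0 : (0:ℝ) < C₀ := lt_of_lt_of_le one_pos hC₀1
  refine ⟨C₀ ^ 2 * (IU * R + 1), by positivity, ?_⟩
  intro ℓ₁ ℓ₂ hℓ₁ hℓ₂ a ha i j hi hj
  have hi1 : (1:ℝ) ≤ (i:ℝ) := by exact_mod_cast hi
  have hj1 : (1:ℝ) ≤ (j:ℝ) := by exact_mod_cast hj
  set m₁ : ℝ := min (i:ℝ) ℓ₁ with hm₁def
  set m₂ : ℝ := min (j:ℝ) ℓ₂ with hm₂def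
  have hm₁0 : 0 < m₁ := lt_min (lt_of_lt_of_le one_pos hi1) hℓ₁
  have hm₂0 : 0 < m₂ := lt_min (lt_of_lt_of_le one_pos hj1) hℓ₂
  -- sine bound
  have hsin : ∀ ℓ : ℝ, 0 < ℓ → ∀ k : ℕ, 1 ≤ (k:ℝ) → ∀ t : ℝ, 0 ≤ t → t ≤ R →
      Real.sin ((k:ℝ) * π * t / ℓ) ^ 2 ≤ C₀ * min (k:ℝ) ℓ ^ 2 / ℓ ^ 2 := by
    intro ℓ hℓ k hk t ht htR
    rcases le_total ((k:ℝ)) ℓ with h | h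
    · rw [min_eq_left h]
      have h1 : Real.sin ((k:ℝ) * π * t / ℓ) ^ 2 ≤ ((k:ℝ) * π * t / ℓ) ^ 2 :=
        Real.sin_sq_le_sq
      have h2 : ((k:ℝ) * π * t / ℓ) ^ 2 = (π ^ 2 * t ^ 2) * ((k:ℝ) ^ 2 / ℓ ^ 2) := by
        field_simp
      have h3 : π ^ 2 * t ^ 2 ≤ C₀ := by
        have ht2 : t ^ 2 ≤ R ^ 2 := by nlinarith
        have : π ^ 2 * t ^ 2 ≤ π ^ 2 * R ^ 2 :=
          mul_le_mul_of_nonneg_left ht2 (sq_nonneg π)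
        exact this.trans (le_max_right _ _)
      calc Real.sin ((k:ℝ) * π * t / ℓ) ^ 2 ≤ (π ^ 2 * t ^ 2) * ((k:ℝ) ^ 2 / ℓ ^ 2) := by
            rw [← h2]; exact h1
        _ ≤ C₀ * ((k:ℝ) ^ 2 / ℓ ^ 2) := by
            apply mul_le_mul_of_nonneg_right h3; positivity
        _ = C₀ * (k:ℝ) ^ 2 / ℓ ^ 2 := by ring
    · rw [min_eq_right h]
      have : C₀ * ℓ ^ 2 / ℓ ^ 2 = C₀ := by field_simp
      rw [this]
      exact (Real.sin_sq_le_one _).trans hC₀1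
  set D : ℝ := (C₀ * m₁ ^ 2 / ℓ₁ ^ 2) * (C₀ * m₂ ^ 2 / ℓ₂ ^ 2) with hDdef
  have hD0 : 0 ≤ D := by positivity
  -- pointwise bound on the support of x ≤ R
  have key : ∀ x ∈ Set.Icc (0:ℝ) ℓ₁, x ≤ R → ∀ y ∈ Set.Icc (0:ℝ) ℓ₂,
      U (x + y + a) * Real.sin ((i:ℝ) * π * x / ℓ₁) ^ 2
        * Real.sin ((j:ℝ) * π * y / ℓ₂) ^ 2 ≤ D * U (x + y + a) := by
    intro x hx hxR y hy
    by_cases hU : U (x + y + a) = 0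
    · rw [hU]; simp
    · have hyR : y ≤ R := by
        have := hsupp _ hU
        linarith [hx.1, ha]
      have h1 := hsin ℓ₁ hℓ₁ i hi1 x hx.1 hxR
      have h2 := hsin ℓ₂ hℓ₂ j hj1 y hy.1 hyR
      have hU0 := hUnonneg (x + y + a)
      have hs1 : (0:ℝ) ≤ Real.sin ((i:ℝ) * π * x / ℓ₁) ^ 2 := sq_nonneg _
      have hs2 : (0:ℝ) ≤ Real.sin ((j:ℝ) * π * y / ℓ₂) ^ 2 := sq_nonneg _
      calc U (x + y + a) * Real.sin ((i:ℝ) * π * x / ℓ₁) ^ 2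
            * Real.sin ((j:ℝ) * π * y / ℓ₂) ^ 2
          ≤ U (x + y + a) * (C₀ * m₁ ^ 2 / ℓ₁ ^ 2) * (C₀ * m₂ ^ 2 / ℓ₂ ^ 2) := by
            apply mul_le_mul (mul_le_mul_of_nonneg_left h1 hU0) h2 hs2
            positivity
        _ = D * U (x + y + a) := by ring
  -- integrability of translated U
  have hUtrans : ∀ x : ℝ, Integrable (fun y : ℝ => U (x + y + a)) := by
    intro x
    have h := hUint.comp_add_right (x + a)
    have : (fun y : ℝ => U (y + (x + a))) = fun y : ℝ => U (x + y + a) := by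
      funext y; ring_nf
    rwa [this] at h
  have hUtransInt : ∀ x : ℝ, (∫ y, U (x + y + a)) = IU := by
    intro x
    have h := integral_add_right_eq_self (μ := volume) U (x + a)
    have h2 : (fun y : ℝ => U (y + (x + a))) = fun y : ℝ => U (x + y + a) := by
      funext y; ring_nf
    rw [← h2]
    exact h
  -- inner integral bound
  set G : ℝ → ℝ := Set.indicator (Set.Iic R) (fun _ => D * IU) with hGdef
  have hInner : ∀ x ∈ Set.Icc (0:ℝ) ℓ₁,
      (∫ y in Set.Icc (0:ℝ) ℓ₂,
        U (x + y + a) * Real.sin ((i:ℝ) * π * x / ℓ₁) ^ 2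
          * Real.sin ((j:ℝ) * π * y / ℓ₂) ^ 2) ≤ G x := by
    intro x hx
    by_cases hxR : x ≤ R
    · have hGx : G x = D * IU := Set.indicator_of_mem (Set.mem_Iic.mpr hxR) _
      rw [hGx]
      have hbint : Integrable (fun y => D * U (x + y + a))
          (volume.restrict (Set.Icc (0:ℝ) ℓ₂)) :=
        ((hUtrans x).const_mul D).integrableOn
      have step1 : (∫ y in Set.Icc (0:ℝ) ℓ₂,
          U (x + y + a) * Real.sin ((i:ℝ) * π * x / ℓ₁) ^ 2
            * Real.sin ((j:ℝ) * π * y / ℓ₂) ^ 2)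
          ≤ ∫ y in Set.Icc (0:ℝ) ℓ₂, D * U (x + y + a) := by
        apply integral_mono_of_nonneg
        · filter_upwards with y
          have := hUnonneg (x + y + a); positivity
        · exact hbint
        · filter_upwards [ae_restrict_mem measurableSet_Icc] with y hy
          exact key x hx hxR y hy
      refine step1.trans ?_
      rw [MeasureTheory.integral_const_mul]
      apply mul_le_mul_of_nonneg_left _ hD0
      have hle := setIntegral_le_integral (s := Set.Icc (0:ℝ) ℓ₂) (hUtrans x)
        (Filter.Eventually.of_forall fun y => hUnonneg _)
      rw [hUtransInt x] at hle
      exact hle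
    · have hGx : G x = 0 := Set.indicator_of_notMem (by simpa using hxR) _
      rw [hGx]
      have hzero : Set.EqOn
          (fun y => U (x + y + a) * Real.sin ((i:ℝ) * π * x / ℓ₁) ^ 2
            * Real.sin ((j:ℝ) * π * y / ℓ₂) ^ 2) (fun _ => (0:ℝ))
          (Set.Icc (0:ℝ) ℓ₂) := by
        intro y hy
        have hU : U (x + y + a) = 0 := by
          by_contra hU
          have := hsupp _ hU
          push_neg at hxR
          linarith [hy.1]
        simp [hU]
      rw [setIntegral_congr_fun measurableSet_Icc hzero]
      simp
  -- outer integral bound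
  have hGint : Integrable G (volume.restrict (Set.Icc (0:ℝ) ℓ₁)) := by
    apply Integrable.indicator _ measurableSet_Iic
    exact integrableOn_const measure_Icc_lt_top.ne
  have houter : (∫ x in Set.Icc (0:ℝ) ℓ₁, ∫ y in Set.Icc (0:ℝ) ℓ₂,
      U (x + y + a) * Real.sin ((i:ℝ) * π * x / ℓ₁) ^ 2
        * Real.sin ((j:ℝ) * π * y / ℓ₂) ^ 2)
      ≤ ∫ x in Set.Icc (0:ℝ) ℓ₁, G x := by
    apply integral_mono_of_nonneg
    · filter_upwards with x
      apply setIntegral_nonneg measurableSet_Icc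
      intro y hy
      have := hUnonneg (x + y + a); positivity
    · exact hGint
    · filter_upwards [ae_restrict_mem measurableSet_Icc] with x hx
      exact hInner x hx
  have hGval : (∫ x in Set.Icc (0:ℝ) ℓ₁, G x) ≤ D * IU * R := by
    rw [hGdef, setIntegral_indicator measurableSet_Iic, setIntegral_const, smul_eq_mul]
    have hsub : Set.Icc (0:ℝ) ℓ₁ ∩ Set.Iic R ⊆ Set.Icc (0:ℝ) R := by
      intro x hx
      exact ⟨hx.1.1, hx.2⟩
    have hvol : (volume (Set.Icc (0:ℝ) ℓ₁ ∩ Set.Iic R)).toReal ≤ R := by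
      have h1 : volume (Set.Icc (0:ℝ) ℓ₁ ∩ Set.Iic R) ≤ volume (Set.Icc (0:ℝ) R) :=
        measure_mono hsub
      have h2 : volume (Set.Icc (0:ℝ) R) = ENNReal.ofReal R := by
        rw [Real.volume_Icc, sub_zero]
      calc (volume (Set.Icc (0:ℝ) ℓ₁ ∩ Set.Iic R)).toReal
          ≤ (volume (Set.Icc (0:ℝ) R)).toReal := by
            apply ENNReal.toReal_mono _ h1
            rw [h2]; exact ENNReal.ofReal_ne_top
        _ = R := by rw [h2, ENNReal.toReal_ofReal hR0.le]
    calc (volume (Set.Icc (0:ℝ) ℓ₁ ∩ Set.Iic R)).toReal * (D * IU)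
        ≤ R * (D * IU) := by
          apply mul_le_mul_of_nonneg_right hvol (by positivity)
      _ = D * IU * R := by ring
  have htotal : (∫ x in Set.Icc (0:ℝ) ℓ₁, ∫ y in Set.Icc (0:ℝ) ℓ₂,
      U (x + y + a) * Real.sin ((i:ℝ) * π * x / ℓ₁) ^ 2
        * Real.sin ((j:ℝ) * π * y / ℓ₂) ^ 2) ≤ D * IU * R := houter.trans hGval
  have hfactor : (0:ℝ) ≤ 1 / (ℓ₁ * ℓ₂) := by positivity
  calc (1 / (ℓ₁ * ℓ₂)) * ∫ x in Set.Icc (0:ℝ) ℓ₁, ∫ y in Set.Icc (0:ℝ) ℓ₂,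
        U (x + y + a) * Real.sin ((i:ℝ) * π * x / ℓ₁) ^ 2
          * Real.sin ((j:ℝ) * π * y / ℓ₂) ^ 2
      ≤ (1 / (ℓ₁ * ℓ₂)) * (D * IU * R) := mul_le_mul_of_nonneg_left htotal hfactor
    _ = (C₀ ^ 2 * (IU * R)) * (m₁ ^ 2 * m₂ ^ 2) / (ℓ₁ ^ 3 * ℓ₂ ^ 3) := by
        rw [hDdef]; field_simp
    _ ≤ C₀ ^ 2 * (IU * R + 1) * m₁ ^ 2 * m₂ ^ 2 / (ℓ₁ ^ 3 * ℓ₂ ^ 3) := by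
        apply (div_le_div_iff_of_pos_right (by positivity : (0:ℝ) < ℓ₁ ^ 3 * ℓ₂ ^ 3)).mpr
        nlinarith [sq_nonneg m₁, sq_nonneg m₂, sq_nonneg (m₁*m₂), hC₀0, hIU0, hR0,
          mul_pos (mul_pos hC₀0 hC₀0) (mul_pos (mul_pos hm₁0 hm₁0) (mul_pos hm₂0 hm₂0))]
end

section
/- Let N : ℝ → ℝ be defined by N(E) := exp(−π/√E)/(1 − exp(−π/√E)) for E > 0 and N(E) := 0 for E ≤ 0; N is nondecreasing and continuous, and let ν denote its Lebesgue–Stieltjes measure. For ρ > 0 let E_ρ := π²/(log(1 + 1/ρ))², so that N(E_ρ) = ρ. Then there exist constants C > 0 and ρ₀ > 0 such that for all ρ ∈ (0, ρ₀): | ρ^{−1}·∫_{(0, E_ρ]} E dν(E) − E_ρ | ≤ C · E_ρ^{3/2}; that is, the ground-state energy per particle of the free system satisfies ρ^{−1}·∫_{(0,E_ρ]} E dν(E) = E_ρ·(1 + O(√E_ρ)) as ρ → 0⁺. -/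
open MeasureTheory Real

private lemma expAux19 {s S : ℝ} (hs : 0 < s) (hsS : s ≤ S) :
    π * (S^2 - s^2) / (2 * S^2 * S) ≤ π/s - π/S := by
  have hS : 0 < S := lt_of_lt_of_le hs hsS
  have e1 : π/s - π/S = π * (S - s) / (s * S) := by
    field_simp
  rw [e1, div_le_div_iff₀ (by positivity) (by positivity)]
  have h2S : 0 ≤ 2*S^2 - s*S - s*s := by nlinarith
  nlinarith [mul_nonneg (mul_nonneg (mul_nonneg Real.pi_pos.le (sub_nonneg.2 hsS)) hS.le) h2S]

/-- Let `N` be the integrated density of states of the Luttinger–Sy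
model (Poisson intensity 1): `N(E) = e^{−π/√E}/(1 − e^{−π/√E})` for `E > 0`, `N(E) = 0`
for `E ≤ 0`. Then `N` is nondecreasing and continuous, and for its Lebesgue–Stieltjes
measure `ν` and the Fermi energy `E_ρ = π²/(log(1+1/ρ))²`, the free ground-state energy
per particle satisfies `ρ⁻¹·∫_{(0,E_ρ]} E dν = E_ρ·(1 + O(√E_ρ))` as `ρ → 0⁺`. -/
theorem stmt19
    (N : ℝ → ℝ)
    (hN : ∀ E : ℝ, N E =
      if 0 < E then
        Real.exp (-(π / Real.sqrt E)) / (1 - Real.exp (-(π / Real.sqrt E)))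
      else 0) :
    Monotone N ∧ Continuous N ∧
      ∀ ν : Measure ℝ,
        (∀ a b : ℝ, a ≤ b → ν (Set.Ioc a b) = ENNReal.ofReal (N b - N a)) →
        ∃ C : ℝ, 0 < C ∧ ∃ ρ₀ : ℝ, 0 < ρ₀ ∧
          ∀ ρ : ℝ, 0 < ρ → ρ < ρ₀ →
            |ρ⁻¹ * (∫ E in Set.Ioc (0:ℝ) (π ^ 2 / (Real.log (1 + 1 / ρ)) ^ 2), E ∂ν)
                - π ^ 2 / (Real.log (1 + 1 / ρ)) ^ 2|
              ≤ C * (π ^ 2 / (Real.log (1 + 1 / ρ)) ^ 2) ^ ((3:ℝ) / 2) := by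
  -- basic facts
  have hNpos : ∀ E : ℝ, 0 < E →
      N E = Real.exp (-(π / Real.sqrt E)) / (1 - Real.exp (-(π / Real.sqrt E))) := by
    intro E hE; rw [hN E, if_pos hE]
  have hNzero : ∀ E : ℝ, E ≤ 0 → N E = 0 := by
    intro E hE; rw [hN E, if_neg (not_lt.2 hE)]
  have hexp_lt_one : ∀ E : ℝ, 0 < E → Real.exp (-(π / Real.sqrt E)) < 1 := by
    intro E hE
    rw [Real.exp_lt_one_iff]
    have : 0 < π / Real.sqrt E := div_pos Real.pi_pos (Real.sqrt_pos.2 hE)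
    linarith
  have hNnonneg : ∀ E : ℝ, 0 ≤ N E := by
    intro E
    rcases le_or_gt E 0 with h | h
    · rw [hNzero E h]
    · rw [hNpos E h]
      exact div_nonneg (Real.exp_nonneg _) (by linarith [hexp_lt_one E h])
  -- monotone
  have hmono : Monotone N := by
    intro a b hab
    rcases le_or_gt b 0 with hb | hb
    · rw [hNzero a (hab.trans hb), hNzero b hb]
    rcases le_or_gt a 0 with ha | ha
    · rw [hNzero a ha]; exact hNnonneg b
    rw [hNpos a ha, hNpos b hb]
    set u := Real.exp (-(π / Real.sqrt a)) with hu
    set v := Real.exp (-(π / Real.sqrt b)) with hv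
    have hu1 : u < 1 := hexp_lt_one a ha
    have hv1 : v < 1 := hexp_lt_one b hb
    have hu0 : 0 < u := Real.exp_pos _
    have hv0 : 0 < v := Real.exp_pos _
    have huv : u ≤ v := by
      apply Real.exp_le_exp.2
      have hsab : Real.sqrt a ≤ Real.sqrt b := Real.sqrt_le_sqrt hab
      have hsa : 0 < Real.sqrt a := Real.sqrt_pos.2 ha
      have : π / Real.sqrt b ≤ π / Real.sqrt a :=
        div_le_div_of_nonneg_left Real.pi_pos.le hsa hsab
      linarith
    rw [div_le_div_iff₀ (by linarith) (by linarith)]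
    nlinarith
  -- continuity
  have hcont : Continuous N := by
    rw [continuous_iff_continuousAt]
    intro x
    rcases lt_trichotomy x 0 with hx | hx | hx
    · have hev : N =ᶠ[nhds x] (fun _ => (0:ℝ)) := by
        filter_upwards [Iio_mem_nhds hx] with y hy
        exact hNzero y (le_of_lt hy)
      exact ContinuousAt.congr continuousAt_const hev.symm
    · -- x = 0 : squeeze
      subst hx
      have hN0 : N 0 = 0 := hNzero 0 le_rfl
      rw [ContinuousAt, hN0]
      apply squeeze_zero' (g := fun t => 2 * Real.sqrt |t|)
      · exact Filter.Eventually.of_forall fun t => hNnonneg t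
      · filter_upwards [Metric.ball_mem_nhds (0:ℝ) one_pos] with t ht
        rcases le_or_gt t 0 with h | h
        · rw [hNzero t h]
          positivity
        · rw [hNpos t h]
          have hst : 0 < Real.sqrt t := Real.sqrt_pos.2 h
          have hst1 : Real.sqrt t < 1 := by
            rw [show (1:ℝ) = Real.sqrt 1 by simp]
            apply Real.sqrt_lt_sqrt h.le
            simpa [abs_of_pos h] using ht
          have hxpos : 0 < π / Real.sqrt t := div_pos Real.pi_pos hst
          have hπ3 : (3:ℝ) < π := by linarith [Real.pi_gt_three]
          have hbig : 2 < π / Real.sqrt t := by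
            have : π / Real.sqrt t > π / 1 := by
              apply div_lt_div_of_pos_left Real.pi_pos hst hst1
            simp at this; linarith
          have hu1 : Real.exp (-(π / Real.sqrt t)) < 1/2 := by
            rw [Real.exp_neg]
            rw [inv_lt_comm₀ (Real.exp_pos _) (by norm_num)]
            calc (1/2 : ℝ)⁻¹ = 2 := by norm_num
            _ < π / Real.sqrt t := hbig
            _ ≤ Real.exp (π / Real.sqrt t) := by
                linarith [Real.add_one_le_exp (π / Real.sqrt t)]
          have hue : Real.exp (-(π / Real.sqrt t)) ≤ Real.sqrt t := by
            rw [Real.exp_neg]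
            rw [inv_le_comm₀ (Real.exp_pos _) hst]
            calc (Real.sqrt t)⁻¹ ≤ π / Real.sqrt t := by
                  rw [div_eq_mul_inv]
                  nlinarith [inv_pos.2 hst]
            _ ≤ Real.exp (π / Real.sqrt t) := by
                linarith [Real.add_one_le_exp (π / Real.sqrt t)]
          have hden : (1:ℝ)/2 ≤ 1 - Real.exp (-(π / Real.sqrt t)) := by linarith
          have habs : Real.sqrt |t| = Real.sqrt t := by rw [abs_of_pos h]
          rw [habs]
          rw [div_le_iff₀ (by linarith)]
          nlinarith [Real.exp_pos (-(π / Real.sqrt t))]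
      · have : Continuous (fun t : ℝ => 2 * Real.sqrt |t|) := by continuity
        simpa using this.tendsto (0:ℝ)
    · -- x > 0
      have hev : N =ᶠ[nhds x]
          (fun E => Real.exp (-(π / Real.sqrt E)) / (1 - Real.exp (-(π / Real.sqrt E)))) := by
        filter_upwards [Ioi_mem_nhds hx] with y hy
        exact hNpos y hy
      apply ContinuousAt.congr _ hev.symm
      have hsx : Real.sqrt x ≠ 0 := (Real.sqrt_pos.2 hx).ne'
      have hnum : ContinuousAt (fun E : ℝ => Real.exp (-(π / Real.sqrt E))) x := by
        apply Real.continuous_exp.continuousAt.comp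
        exact (ContinuousAt.div continuousAt_const
          Real.continuous_sqrt.continuousAt hsx).neg
      exact hnum.div (continuousAt_const.sub hnum) (by linarith [hexp_lt_one x hx])
  refine ⟨hmono, hcont, ?_⟩
  intro ν hν
  refine ⟨1, one_pos, 1, one_pos, ?_⟩
  intro ρ hρ _
  have h1ρ : (1:ℝ) < 1 + 1/ρ := by
    have : 0 < 1/ρ := by positivity
    linarith
  set L := Real.log (1 + 1/ρ) with hLdef
  have hL : 0 < L := Real.log_pos h1ρ
  set b := π^2 / L^2 with hbdef
  have hb : 0 < b := by positivity
  have hsb : Real.sqrt b = π / L := by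
    rw [hbdef, show π^2 / L^2 = (π/L)^2 by ring, Real.sqrt_sq (by positivity)]
  have hπb : π / Real.sqrt b = L := by
    rw [hsb]
    field_simp
  have hexpL : Real.exp (-L) = (1 + 1/ρ)⁻¹ := by
    rw [Real.exp_neg, hLdef, Real.exp_log (by linarith)]
  have hρ0 : ρ ≠ 0 := ne_of_gt hρ
  have hNb : N b = ρ := by
    rw [hNpos b hb, hπb, hexpL]
    have h0 : (1:ℝ) + 1/ρ ≠ 0 := by positivity
    have h1 : 1 - ((1:ℝ) + 1/ρ)⁻¹ = (1/ρ) / (1 + 1/ρ) := by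
      field_simp
      ring
    rw [h1, div_div_eq_mul_div, inv_mul_cancel₀ h0, one_div_one_div]
  have hN0 : N 0 = 0 := hNzero 0 le_rfl
  have hν0b : ν (Set.Ioc 0 b) = ENNReal.ofReal ρ := by
    rw [hν 0 b hb.le, hN0, hNb, sub_zero]
  set μ := ν.restrict (Set.Ioc 0 b) with hμdef
  haveI : IsFiniteMeasure μ := by
    constructor
    rw [hμdef, Measure.restrict_apply_univ, hν0b]
    exact ENNReal.ofReal_lt_top
  have hf_nn : 0 ≤ᵐ[μ] (fun E : ℝ => E) := by
    filter_upwards [ae_restrict_mem measurableSet_Ioc] with x hx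
    exact hx.1.le
  have hint : Integrable (fun E : ℝ => E) μ := by
    apply Integrable.mono' (integrable_const b) measurable_id.aestronglyMeasurable
    filter_upwards [ae_restrict_mem measurableSet_Ioc] with x hx
    simp only [id_eq]
    rw [Real.norm_eq_abs, abs_of_pos hx.1]
    exact hx.2
  have key := hint.integral_eq_integral_meas_lt hf_nn
  have hmeas : ∀ t ∈ Set.Ioi (0:ℝ),
      (μ {a : ℝ | t < a}).toReal = Set.indicator (Set.Iic b) (fun t => N b - N t) t := by
    intro t ht
    have ht0 : (0:ℝ) < t := ht
    have hset : {a : ℝ | t < a} = Set.Ioi t := rfl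
    rw [hset, hμdef, Measure.restrict_apply measurableSet_Ioi]
    have hinter : Set.Ioi t ∩ Set.Ioc 0 b = Set.Ioc t b := by
      ext x
      simp only [Set.mem_inter_iff, Set.mem_Ioi, Set.mem_Ioc]
      constructor
      · rintro ⟨h1, _, h3⟩; exact ⟨h1, h3⟩
      · rintro ⟨h1, h2⟩; exact ⟨h1, lt_trans ht0 h1, h2⟩
    rw [hinter]
    rcases le_or_gt t b with htb | htb
    · rw [hν t b htb, ENNReal.toReal_ofReal (sub_nonneg.2 (hmono htb)),
        Set.indicator_of_mem (Set.mem_Iic.2 htb)]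
    · rw [Set.Ioc_eq_empty (not_lt.2 htb.le), measure_empty,
        Set.indicator_of_notMem (by simpa using htb)]
      simp
  have hI1 : ∫ t in Set.Ioi (0:ℝ), (μ {a : ℝ | t < a}).toReal
      = ∫ t in Set.Ioc (0:ℝ) b, (N b - N t) := by
    rw [setIntegral_congr_fun measurableSet_Ioi hmeas,
        setIntegral_indicator measurableSet_Iic, Set.Ioi_inter_Iic]
  have hNint : IntegrableOn N (Set.Ioc 0 b) := hcont.integrableOn_Ioc
  have hsplit : ∫ t in Set.Ioc (0:ℝ) b, (N b - N t)
      = b * ρ - ∫ t in Set.Ioc (0:ℝ) b, N t := by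
    rw [integral_sub (integrableOn_const (C := N b) (by rw [Real.volume_Ioc]; exact ENNReal.ofReal_ne_top)) hNint]
    congr 1
    rw [setIntegral_const, measureReal_def, Real.volume_Ioc, smul_eq_mul, sub_zero,
      ENNReal.toReal_ofReal hb.le, hNb]
  set I := ∫ t in Set.Ioc (0:ℝ) b, N t with hIdef
  have hI0 : 0 ≤ I := setIntegral_nonneg measurableSet_Ioc fun x _ => hNnonneg x
  set c := π / (2 * b * Real.sqrt b) with hcdef
  have hc : 0 < c := by
    apply div_pos Real.pi_pos
    positivity
  -- pointwise exponential bound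
  have hpt : ∀ t ∈ Set.Ioc (0:ℝ) b, N t ≤ ρ * Real.exp (c * (t - b)) := by
    rintro t ⟨ht0, htb⟩
    set s := Real.sqrt t with hsdef
    set S := Real.sqrt b with hSdef
    have hs : 0 < s := Real.sqrt_pos.2 ht0
    have hS : 0 < S := Real.sqrt_pos.2 hb
    have hsS : s ≤ S := Real.sqrt_le_sqrt htb
    have hs2 : s^2 = t := Real.sq_sqrt ht0.le
    have hS2 : S^2 = b := Real.sq_sqrt hb.le
    -- exponent inequality
    have hexpo : -(π/s) ≤ -(π/S) + c * (t - b) := by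
      have hct : c * (t - b) = -(π * (S^2 - s^2) / (2 * S^2 * S)) := by
        rw [hcdef, ← hs2, ← hS2]
        field_simp
        ring
      rw [hct]
      have hkey : π * (S^2 - s^2) / (2 * S^2 * S) ≤ π/s - π/S := expAux19 hs hsS
      linarith
    have hw1 : Real.exp (c * (t - b)) ≤ 1 := by
      rw [Real.exp_le_one_iff]
      exact mul_nonpos_of_nonneg_of_nonpos hc.le (by linarith)
    have hnum : Real.exp (-(π/s)) ≤ Real.exp (-(π/S)) * Real.exp (c * (t - b)) := by
      rw [← Real.exp_add]
      exact Real.exp_le_exp.2 hexpo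
    have hv1 : Real.exp (-(π/S)) < 1 := by
      have := hexp_lt_one b hb
      rwa [← hSdef] at this
    have hu1 : Real.exp (-(π/s)) < 1 := by
      have := hexp_lt_one t ht0
      rwa [← hsdef] at this
    have huv : Real.exp (-(π/s)) ≤ Real.exp (-(π/S)) := by
      calc Real.exp (-(π/s)) ≤ Real.exp (-(π/S)) * Real.exp (c * (t - b)) := hnum
      _ ≤ Real.exp (-(π/S)) * 1 := by
          exact mul_le_mul_of_nonneg_left hw1 (Real.exp_pos _).le
      _ = Real.exp (-(π/S)) := mul_one _
    have hstep : N t ≤ (Real.exp (-(π/S)) * Real.exp (c * (t - b))) / (1 - Real.exp (-(π/S))) := by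
      rw [hNpos t ht0, ← hsdef]
      apply div_le_div₀ (by positivity) hnum (by linarith) (by linarith)
    calc N t ≤ (Real.exp (-(π/S)) * Real.exp (c * (t - b))) / (1 - Real.exp (-(π/S))) := hstep
    _ = (Real.exp (-(π/S)) / (1 - Real.exp (-(π/S)))) * Real.exp (c * (t - b)) := by
        rw [mul_div_right_comm]
    _ = ρ * Real.exp (c * (t - b)) := by
        rw [← hNb, hNpos b hb, ← hSdef]
  -- integral of the exponential bound
  have hexpint : ∫ t in Set.Ioc (0:ℝ) b, Real.exp (c * (t - b)) ≤ 1/c := by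
    have heq : ∫ t in Set.Ioc (0:ℝ) b, Real.exp (c * (t - b))
        = ∫ t in (0:ℝ)..b, Real.exp (c * (t - b)) :=
      (intervalIntegral.integral_of_le hb.le).symm
    rw [heq]
    have hder : ∀ x ∈ Set.uIcc (0:ℝ) b,
        HasDerivAt (fun t => Real.exp (c * (t - b)) / c) (Real.exp (c * (x - b))) x := by
      intro x _
      have h1 : HasDerivAt (fun t : ℝ => c * (t - b)) c x := by
        simpa using ((hasDerivAt_id x).sub_const b).const_mul c
      have h2 := (Real.hasDerivAt_exp (c * (x - b))).comp x h1
      have h3 := h2.div_const c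
      simpa [mul_div_assoc, mul_div_cancel_right₀ _ (ne_of_gt hc)] using h3
    rw [intervalIntegral.integral_eq_sub_of_hasDerivAt hder
      ((Real.continuous_exp.comp (continuous_const.mul (continuous_id.sub continuous_const))).intervalIntegrable 0 b)]
    have h4 : (0:ℝ) ≤ Real.exp (c * (0 - b)) / c := by positivity
    have h5 : Real.exp (c * (b - b)) / c = 1/c := by
      simp
    rw [h5]
    linarith
  have hexpcont : Continuous (fun t : ℝ => ρ * Real.exp (c * (t - b))) :=
    continuous_const.mul (Real.continuous_exp.comp (continuous_const.mul (continuous_id.sub continuous_const)))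
  have hIbound : I ≤ ρ * (1/c) := by
    calc I ≤ ∫ t in Set.Ioc (0:ℝ) b, ρ * Real.exp (c * (t - b)) :=
        setIntegral_mono_on hNint hexpcont.integrableOn_Ioc measurableSet_Ioc hpt
    _ = ρ * ∫ t in Set.Ioc (0:ℝ) b, Real.exp (c * (t - b)) := by
        rw [integral_const_mul]
    _ ≤ ρ * (1/c) := mul_le_mul_of_nonneg_left hexpint hρ.le
  -- assemble
  have hval : ∫ E in Set.Ioc (0:ℝ) b, E ∂ν = b * ρ - I := key.trans (hI1.trans hsplit)
  rw [hval]
  have hre : ρ⁻¹ * (b * ρ - I) - b = -(ρ⁻¹ * I) := by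
    field_simp
    ring
  rw [hre, abs_neg, abs_of_nonneg (by positivity)]
  have hrpow : b ^ ((3:ℝ)/2) = b * Real.sqrt b := by
    rw [Real.sqrt_eq_rpow, show ((3:ℝ)/2) = 1 + 1/2 by norm_num, Real.rpow_add hb, Real.rpow_one]
  rw [one_mul, hrpow]
  have h1c : 1/c = 2 * b * Real.sqrt b / π := by
    rw [hcdef, one_div_div]
  have hfin : ρ⁻¹ * I ≤ 1/c := by
    calc ρ⁻¹ * I ≤ ρ⁻¹ * (ρ * (1/c)) := mul_le_mul_of_nonneg_left hIbound (by positivity)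
    _ = 1/c := by field_simp
  have hlast : 1/c ≤ b * Real.sqrt b := by
    rw [h1c, div_le_iff₀ Real.pi_pos]
    have hsb0 : 0 < Real.sqrt b := Real.sqrt_pos.2 hb
    have h3 := mul_lt_mul_of_pos_left Real.pi_gt_three (mul_pos hb hsb0)
    linarith [mul_pos hb hsb0]
  linarith
end
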